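/- arXiv:math/0510375 — 15 statements merged into one kernel-verified Lean document; each statement's English description precedes it below -/
import Mathlib

section
/- Let ū ∈ G be a fixed central element, write r₁ = r(ū) and l₁ = l(ū), and let ξ ∈ K^* satisfy ξ² r₁ l₁ = 1. Then for all k ∈ ℤ and all m ∈ G, ξ^k h(m + k·ū) + ξ^{-k} h(m - k·ū) = ((ξ r₁)^k + (ξ r₁)^{-k}) h(m). (Here k·ū denotes the k-th multiple of ū in G.) -/
theorem stmt2 {K : Type*} [Field K] {G : Type*} [AddGroup G]
    (r l h : G → K)
    (hr1 : r 0 = 1) (hradd : ∀ m n, r (m + n) = r m * r n) (hrne : ∀ m, r m ≠ 0)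
    (hl1 : l 0 = 1) (hladd : ∀ m n, l (m + n) = l m * l n) (hlne : ∀ m, l m ≠ 0)
    (hcoc : ∀ m n, h (m + n) = h m * r n + l m * h n)
    (h0 : h 0 = 0)
    (u : G) (hu : ∀ g : G, u + g = g + u)
    (ξ : K) (hξ : ξ ≠ 0) (hxirl : ξ ^ 2 * (r u * l u) = 1) :
    ∀ (k : ℤ) (m : G),
      ξ ^ k * h (m + k • u) + ξ ^ (-k) * h (m - k • u)
        = ((ξ * r u) ^ k + (ξ * r u) ^ (-k)) * h m := by
  -- inverses of r and l
  have hrneg : ∀ g, r (-g) = (r g)⁻¹ := by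
    intro g
    have hh : r g * r (-g) = 1 := by rw [← hradd, add_neg_cancel, hr1]
    exact eq_inv_of_mul_eq_one_left (mul_comm (r g) (r (-g)) ▸ hh)
  have hlneg : ∀ g, l (-g) = (l g)⁻¹ := by
    intro g
    have hh : l g * l (-g) = 1 := by rw [← hladd, add_neg_cancel, hl1]
    exact eq_inv_of_mul_eq_one_left (mul_comm (l g) (l (-g)) ▸ hh)
  -- r and l on integer multiples of u
  have hrZ : ∀ k : ℤ, r (k • u) = r u ^ k := by
    intro k
    induction k using Int.induction_on with
    | zero => simp [hr1]
    | succ n ih => rw [add_zsmul, one_zsmul, hradd, ih, zpow_add_one₀ (hrne u)]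
    | pred n ih =>
        have e : (-(n : ℤ) - 1) • u = (-(n : ℤ)) • u + -u := by
          rw [sub_zsmul, one_zsmul]
        rw [e, hradd, ih, hrneg, zpow_sub_one₀ (hrne u)]
  have hlN : ∀ n : ℕ, l (n • u) = l u ^ n := by
    intro n
    induction n with
    | zero => simp [hl1]
    | succ n ih => rw [succ_nsmul, hladd, ih, pow_succ]
  have hlnegN : ∀ n : ℕ, l (-(n • u)) = ((l u)⁻¹) ^ n := by
    intro n; rw [hlneg, hlN, inv_pow]
  -- basic scalar relations
  have hrs : r u * (r u)⁻¹ = 1 := mul_inv_cancel₀ (hrne u)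
  have hlt : l u * (l u)⁻¹ = 1 := mul_inv_cancel₀ (hlne u)
  have hr0 : r u ≠ 0 := hrne u
  have hl0 : l u ≠ 0 := hlne u
  have hA : ξ * l u = ξ⁻¹ * (r u)⁻¹ := by
    field_simp
    linear_combination hxirl
  have hB : ξ⁻¹ * (l u)⁻¹ = ξ * r u := by
    field_simp
    linear_combination -hxirl
  -- h(-u)
  have hmu : l u * h (-u) = -(h u * (r u)⁻¹) := by
    have hh := hcoc u (-u)
    rw [add_neg_cancel, h0, hrneg] at hh
    linear_combination -hh
  -- step relations for h on multiples of u
  have hx_step : ∀ n : ℕ, h ((n + 1) • u) = h (n • u) * r u + (l u) ^ n * h u := by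
    intro n
    rw [succ_nsmul, hcoc, hlN]
  have hy_step : ∀ n : ℕ,
      h (-((n + 1) • u)) = h (-(n • u)) * (r u)⁻¹ + ((l u)⁻¹) ^ n * h (-u) := by
    intro n
    have h1 : -((n + 1) • u) = -(n • u) + -u := by
      rw [succ_nsmul', neg_add_rev]
    rw [h1, hcoc, hrneg, hlnegN]
  -- the key cancellation, natural number version, by two-step induction
  have key2 : ∀ n : ℕ,
      (ξ ^ n * h (n • u) + (ξ⁻¹) ^ n * h (-(n • u)) = 0) ∧
      (ξ ^ (n + 1) * h ((n + 1) • u) + (ξ⁻¹) ^ (n + 1) * h (-((n + 1) • u)) = 0) := by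
    intro n
    induction n with
    | zero =>
      constructor
      · simp [h0]
      · have e1 : (1 : ℕ) • u = u := one_nsmul u
        rw [e1, pow_one, pow_one]
        linear_combination (ξ⁻¹ * (l u)⁻¹) * hmu - (ξ⁻¹ * h (-u)) * hlt -
          (h u * ξ) * hrs - (h u * (r u)⁻¹) * hB
    | succ n ih =>
      obtain ⟨hn, hn1⟩ := ih
      refine ⟨hn1, ?_⟩
      have e1 := hx_step (n + 1)
      have e2 := hy_step (n + 1)
      have e3 := hx_step n
      have e4 := hy_step n
      linear_combination
        (ξ * r u + ξ⁻¹ * (r u)⁻¹) * hn1 - ((ξ * r u) * (ξ⁻¹ * (r u)⁻¹)) * hn +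
        (ξ ^ (n + 2)) * e1 + ((ξ⁻¹) ^ (n + 2)) * e2 -
        ((ξ⁻¹ * (r u)⁻¹) * ξ ^ (n + 1)) * e3 - ((ξ * r u) * (ξ⁻¹) ^ (n + 1)) * e4 +
        (h u * (l u) ^ n * ξ ^ (n + 1)) * hA +
        (h (-u) * ((l u)⁻¹) ^ n * (ξ⁻¹) ^ (n + 1)) * hB
  have key : ∀ n : ℕ, ξ ^ n * h (n • u) + (ξ⁻¹) ^ n * h (-(n • u)) = 0 :=
    fun n => (key2 n).1
  -- integer version
  have keyZ : ∀ k : ℤ, ξ ^ k * h (k • u) + ξ ^ (-k) * h ((-k) • u) = 0 := by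
    intro k
    obtain ⟨n, rfl | rfl⟩ := k.eq_nat_or_neg
    · simp only [zpow_neg, zpow_natCast, natCast_zsmul, neg_zsmul, ← inv_pow]
      exact key n
    · simp only [neg_neg, zpow_neg, zpow_natCast, neg_zsmul, natCast_zsmul, ← inv_pow]
      linear_combination key n
  -- main statement
  intro k m
  have e1 : h (m + k • u) = h m * (r u) ^ k + l m * h (k • u) := by
    rw [hcoc, hrZ]
  have e2 : h (m - k • u) = h m * (r u) ^ (-k) + l m * h ((-k) • u) := by
    rw [sub_eq_add_neg, ← neg_zsmul, hcoc, hrZ]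
  rw [e1, e2]
  have hD := keyZ k
  have hq : (ξ * r u) ^ k = ξ ^ k * (r u) ^ k := mul_zpow ξ (r u) k
  have hq' : (ξ * r u) ^ (-k) = ξ ^ (-k) * (r u) ^ (-k) := mul_zpow ξ (r u) (-k)
  rw [hq, hq']
  linear_combination (l m) * hD
end

section
/- With the same hypotheses, for every integer n ≥ 1, h(n·ū) = h(ū) · l₁^{n-1} · ∑_{i=0}^{n-1} (ξ r₁)^{2i}. -/
theorem stmt3 {K : Type*} [Field K] {G : Type*} [AddGroup G]
    (r l h : G → K)
    (hr1 : r 0 = 1) (hradd : ∀ m n, r (m + n) = r m * r n) (hrne : ∀ m, r m ≠ 0)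
    (hl1 : l 0 = 1) (hladd : ∀ m n, l (m + n) = l m * l n) (hlne : ∀ m, l m ≠ 0)
    (hcoc : ∀ m n, h (m + n) = h m * r n + l m * h n)
    (h0 : h 0 = 0)
    (u : G) (hu : ∀ g : G, u + g = g + u)
    (ξ : K) (hξ : ξ ≠ 0) (hxirl : ξ ^ 2 * (r u * l u) = 1) :
    ∀ n : ℕ, 1 ≤ n →
      h (n • u) = h u * (l u) ^ (n - 1) * ∑ i ∈ Finset.range n, (ξ * r u) ^ (2 * i) := by
  have hlpow : ∀ n : ℕ, l (n • u) = l u ^ n := by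
    intro n
    induction n with
    | zero => simpa using hl1
    | succ k ih => rw [succ_nsmul, hladd, ih, pow_succ]
  have hq : (ξ * r u) ^ 2 * l u = r u := by
    have : (ξ * r u) ^ 2 * l u = (ξ ^ 2 * (r u * l u)) * r u := by ring
    rw [this, hxirl, one_mul]
  intro n hn
  induction n with
  | zero => omega
  | succ k ih =>
    rcases Nat.eq_or_lt_of_le hn with h1 | h1
    · simp [← h1, one_nsmul]
    · have hk : 1 ≤ k := by omega
      rw [succ_nsmul, hcoc, ih hk, hlpow]
      rw [Finset.sum_range_succ]
      have hkk : k - 1 + 1 = k := by omega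
      have : l u ^ (k - 1) * l u = l u ^ k := by rw [← pow_succ, hkk]
      rw [Nat.succ_sub_one]
      -- goal: h u * l u ^ (k-1) * S * r u + l u ^ k * h u = h u * l u ^ k * (S + (ξ*r u)^(2k))
      have hru : r u = (ξ * r u) ^ 2 * l u := hq.symm
      nth_rewrite 2 [hru]
      have hsum : (∑ i ∈ Finset.range k, (ξ * r u) ^ (2 * i)) * (ξ * r u) ^ 2
          = ∑ i ∈ Finset.range k, (ξ * r u) ^ (2 * (i + 1)) := by
        rw [Finset.sum_mul]
        apply Finset.sum_congr rfl
        intro i _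
        rw [← pow_add]
        ring_nf
      have hshift : ∑ i ∈ Finset.range k, (ξ * r u) ^ (2 * (i + 1))
          = ∑ i ∈ Finset.range (k + 1), (ξ * r u) ^ (2 * i) - 1 := by
        rw [Finset.sum_range_succ' (fun i => (ξ * r u) ^ (2 * i))]
        simp
      calc h u * l u ^ (k - 1) * (∑ i ∈ Finset.range k, (ξ * r u) ^ (2 * i)) *
              ((ξ * r u) ^ 2 * l u) + l u ^ k * h u
          = h u * (l u ^ (k - 1) * l u) *
              ((∑ i ∈ Finset.range k, (ξ * r u) ^ (2 * i)) * (ξ * r u) ^ 2) +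
              l u ^ k * h u := by ring
        _ = h u * l u ^ k * (∑ i ∈ Finset.range (k + 1), (ξ * r u) ^ (2 * i) - 1) +
              l u ^ k * h u := by rw [this, hsum, hshift]
        _ = h u * l u ^ k * ((∑ i ∈ Finset.range k, (ξ * r u) ^ (2 * i)) + (ξ * r u) ^ (2 * k)) := by
              rw [Finset.sum_range_succ]; ring
end

section
/- Assume additionally h(ū) ≠ 0, and define G_{1/2} = {m ∈ G : h(m - ū) + ξ h(m) = 0}. If G_{1/2} is nonempty then ξ r₁ ≠ -1. -/
theorem stmt4 {K : Type*} [Field K] {G : Type*} [AddGroup G]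
    (r l h : G → K)
    (hr1 : r 0 = 1) (hradd : ∀ m n, r (m + n) = r m * r n) (hrne : ∀ m, r m ≠ 0)
    (hl1 : l 0 = 1) (hladd : ∀ m n, l (m + n) = l m * l n) (hlne : ∀ m, l m ≠ 0)
    (hcoc : ∀ m n, h (m + n) = h m * r n + l m * h n)
    (h0 : h 0 = 0)
    (u : G) (hu : ∀ g : G, u + g = g + u)
    (ξ : K) (hξ : ξ ≠ 0) (hxirl : ξ ^ 2 * (r u * l u) = 1)
    (hhu : h u ≠ 0)
    (hne : ∃ m : G, h (m - u) + ξ * h m = 0) :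
    ξ * r u ≠ -1 := by
  intro hcon
  obtain ⟨m, hm⟩ := hne
  have h1 : h m = h (m - u) * r u + l (m - u) * h u := by
    have := hcoc (m - u) u
    rwa [sub_add_cancel] at this
  have h2 : h (m - u) = -(ξ * h m) := eq_neg_of_add_eq_zero_left hm
  rw [h2] at h1
  have h3 : l (m - u) * h u = 0 := by
    linear_combination -h1 + h m * hcon
  exact (mul_ne_zero (hlne _) hhu) h3
end

section
/- Assume h(ū) ≠ 0. If m ∈ G_{1/2} then ū - m ∈ G_{1/2}. -/
theorem stmt6 {K : Type*} [Field K] {G : Type*} [AddGroup G]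
    (r l h : G → K)
    (hr1 : r 0 = 1) (hradd : ∀ m n, r (m + n) = r m * r n) (hrne : ∀ m, r m ≠ 0)
    (hl1 : l 0 = 1) (hladd : ∀ m n, l (m + n) = l m * l n) (hlne : ∀ m, l m ≠ 0)
    (hcoc : ∀ m n, h (m + n) = h m * r n + l m * h n)
    (h0 : h 0 = 0)
    (u : G) (hu : ∀ g : G, u + g = g + u)
    (ξ : K) (hξ : ξ ≠ 0) (hxirl : ξ ^ 2 * (r u * l u) = 1)
    (hhu : h u ≠ 0)
    (m : G) (hm : h (m - u) + ξ * h m = 0) :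
    h ((u - m) - u) + ξ * h (u - m) = 0 := by
  have hrinv : ∀ g : G, r g * r (-g) = 1 := fun g => by
    rw [← hradd, add_neg_cancel, hr1]
  have hinv : ∀ g : G, h g * r (-g) + l g * h (-g) = 0 := fun g => by
    have := hcoc g (-g)
    rw [add_neg_cancel, h0] at this
    exact this.symm
  have hc : u - m - u = -m := by
    rw [sub_eq_add_neg u m, hu (-m), add_sub_cancel_right]
  rw [hc, sub_eq_add_neg u m, hcoc u (-m)]
  rw [sub_eq_add_neg m u, hcoc m (-u)] at hm
  have e2 := hinv m
  have e3 := hinv u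
  have e4 := hrinv u
  have key : l m * h u * ξ = h m * l u * ξ + h m := by
    linear_combination (-(ξ * l u * r u)) * hm + (ξ * r u * l m) * e3
      + (ξ * l u * h m - ξ * l m * h u) * e4 + (h m) * hxirl
  have hne : ξ * l m ≠ 0 := mul_ne_zero hξ (hlne m)
  have final : ξ * l m * (h (-m) + ξ * (h u * r (-m) + l u * h (-m))) = 0 := by
    linear_combination (ξ * (1 + ξ * l u)) * e2 + (ξ * r (-m)) * key
  exact (mul_eq_zero.mp final).resolve_left hne
end

section
/- Assume h(ū) ≠ 0. If m, n ∈ G_{1/2} then h(m + n - ū) = 0, i.e. m + n - ū ∈ G₀. -/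
theorem stmt7 {K : Type*} [Field K] {G : Type*} [AddGroup G]
    (r l h : G → K)
    (hr1 : r 0 = 1) (hradd : ∀ m n, r (m + n) = r m * r n) (hrne : ∀ m, r m ≠ 0)
    (hl1 : l 0 = 1) (hladd : ∀ m n, l (m + n) = l m * l n) (hlne : ∀ m, l m ≠ 0)
    (hcoc : ∀ m n, h (m + n) = h m * r n + l m * h n)
    (h0 : h 0 = 0)
    (u : G) (hu : ∀ g : G, u + g = g + u)
    (ξ : K) (hξ : ξ ≠ 0) (hxirl : ξ ^ 2 * (r u * l u) = 1)
    (hhu : h u ≠ 0)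
    (m n : G) (hm : h (m - u) + ξ * h m = 0) (hn : h (n - u) + ξ * h n = 0) :
    h (m + n - u) = 0 := by
  -- basic rewrites
  have sac : ∀ g : G, g - u + u = g := fun g => sub_add_cancel g u
  have rmu : r (m - u) * r u = r m := by
    have := hradd (m - u) u; rw [sac] at this; exact this.symm
  have lmu : l (m - u) * l u = l m := by
    have := hladd (m - u) u; rw [sac] at this; exact this.symm
  have rnu : r (n - u) * r u = r n := by
    have := hradd (n - u) u; rw [sac] at this; exact this.symm
  -- cocycle splittings
  have c1m : h m = h u * r (m - u) + l u * h (m - u) := by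
    have := hcoc u (m - u); rw [hu, sac] at this; exact this
  have c2m : h m = h (m - u) * r u + l (m - u) * h u := by
    have := hcoc (m - u) u; rw [sac] at this; exact this
  have c1n : h n = h u * r (n - u) + l u * h (n - u) := by
    have := hcoc u (n - u); rw [hu, sac] at this; exact this
  -- key linear relations
  have e1 : h m * r u * (1 + ξ * l u) = h u * r m := by
    linear_combination r u * c1m + (r u * l u) * hm + h u * rmu
  have e2 : h m * l u * (1 + ξ * r u) = h u * l m := by
    linear_combination l u * c2m + (l u * r u) * hm + h u * lmu
  have e3 : h n * r u * (1 + ξ * l u) = h u * r n := by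
    linear_combination r u * c1n + (r u * l u) * hn + h u * rnu
  -- scaled key identity
  have key : ((h m * r n + l m * h n) * r u) * (h u * h u) =
      (h u * (r m * r n)) * (h u * h u) := by
    linear_combination (h u * (h n * r u * (1 + ξ * l u))) * e1
      - (r u * h u * h n) * e2 + (h u ^ 2 * r m - r u * h u * h m) * e3
      - (h u * r u * l u * h m * h n) * hxirl
  have key2 : (h m * r n + l m * h n) * r u = h u * (r m * r n) :=
    mul_right_cancel₀ (mul_ne_zero hhu hhu) key
  -- finish
  have c3 : h (m + n) = h u * r (m + n - u) + l u * h (m + n - u) := by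
    have := hcoc u (m + n - u); rw [hu, sac] at this; exact this
  have rmnu : r (m + n - u) * r u = r m * r n := by
    have := hradd (m + n - u) u; rw [sac, hradd] at this; exact this.symm
  have hc := hcoc m n
  have final : l u * r u * h (m + n - u) = 0 := by
    linear_combination (-(r u)) * c3 + (-(h u)) * rmnu + r u * hc + key2
  have hne : l u * r u ≠ 0 := mul_ne_zero (hlne u) (hrne u)
  exact (mul_eq_zero.mp final).resolve_left hne
end

section
/- Assume h(ū) ≠ 0 and m_{1/2} ∈ G_{1/2}. Then for j ∈ ℤ, m_{1/2} + j·ū ∈ G_{1/2} if and only if j·ū ∈ G₀, i.e. h(j·ū) = 0. -/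
theorem stmt8 {K : Type*} [Field K] {G : Type*} [AddGroup G]
    (r l h : G → K)
    (hr1 : r 0 = 1) (hradd : ∀ m n, r (m + n) = r m * r n) (hrne : ∀ m, r m ≠ 0)
    (hl1 : l 0 = 1) (hladd : ∀ m n, l (m + n) = l m * l n) (hlne : ∀ m, l m ≠ 0)
    (hcoc : ∀ m n, h (m + n) = h m * r n + l m * h n)
    (h0 : h 0 = 0)
    (u : G) (hu : ∀ g : G, u + g = g + u)
    (ξ : K) (hξ : ξ ≠ 0) (hxirl : ξ ^ 2 * (r u * l u) = 1)
    (hhu : h u ≠ 0)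
    (m12 : G) (hm12 : h (m12 - u) + ξ * h m12 = 0) :
    ∀ j : ℤ, (h (m12 + j • u - u) + ξ * h (m12 + j • u) = 0) ↔ h (j • u) = 0 := by
  intro j
  have hlu := hlne u
  have hwcomm : ∀ g : G, j • u + g = g + j • u := by
    intro g
    exact AddCommute.zsmul_left (hu g) j
  set w := j • u with hwdef
  have hlneg : l (-u) = (l u)⁻¹ := by
    have h1 : l u * l (-u) = 1 := by rw [← hladd, add_neg_cancel, hl1]
    exact (inv_eq_of_mul_eq_one_right h1).symm
  have hmu : h (m12 - u) = -(ξ * h m12) := eq_neg_of_add_eq_zero_left hm12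
  have e1 : m12 - u + u = m12 := by simp
  have hm : h m12 = -(ξ * h m12) * r u + l m12 * (l u)⁻¹ * h u := by
    have h2 := hcoc (m12 - u) u
    rw [e1, hmu, sub_eq_add_neg, hladd, hlneg] at h2
    linear_combination h2
  have hξl : (l u)⁻¹ + ξ ≠ 0 := by
    intro hc
    have hxi : ξ * l u = -1 := by
      have hξe : ξ = -(l u)⁻¹ := eq_neg_of_add_eq_zero_right hc
      rw [hξe]
      field_simp
    have hxr : ξ * r u = -1 := by
      have h2 : (ξ * r u) * (ξ * l u) = 1 := by linear_combination hxirl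
      rw [hxi] at h2
      linear_combination -h2
    have hz : l m12 * (l u)⁻¹ * h u = 0 := by
      linear_combination -hm + h m12 * hxr
    exact mul_ne_zero (mul_ne_zero (hlne m12) (inv_ne_zero hlu)) hhu hz
  have e2 : m12 + w - u = m12 - u + w := by
    have h3 : w - u = -u + w := by rw [sub_eq_add_neg]; exact hwcomm (-u)
    rw [add_sub_assoc, h3, ← add_assoc, ← sub_eq_add_neg]
  have key : h (m12 + w - u) + ξ * h (m12 + w) = l m12 * ((l u)⁻¹ + ξ) * h w := by
    rw [e2, hcoc (m12 - u) w, hcoc m12 w, hmu, sub_eq_add_neg m12 u, hladd, hlneg]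
    ring
  rw [key]
  constructor
  · intro hz
    rcases mul_eq_zero.mp hz with h1 | h2
    · rcases mul_eq_zero.mp h1 with h3 | h4
      · exact absurd h3 (hlne m12)
      · exact absurd h4 hξl
    · exact h2
  · intro hz; rw [hz, mul_zero]
end

section
/- For any m ∈ G and any non-negative integer j, setting n = 2j+1, one has ∑_{k=0}^{n-1} ξ^{n-1-k} h(m - k·ū) = r₁^{-j} h(m - j·ū) · ∑_{k=0}^{n-1} (ξ r₁)^k. -/
theorem stmt9 {K : Type*} [Field K] {G : Type*} [AddGroup G]
    (r l h : G → K)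
    (hr1 : r 0 = 1) (hradd : ∀ m n, r (m + n) = r m * r n) (hrne : ∀ m, r m ≠ 0)
    (hl1 : l 0 = 1) (hladd : ∀ m n, l (m + n) = l m * l n) (hlne : ∀ m, l m ≠ 0)
    (hcoc : ∀ m n, h (m + n) = h m * r n + l m * h n)
    (h0 : h 0 = 0)
    (u : G) (hu : ∀ g : G, u + g = g + u)
    (ξ : K) (hξ : ξ ≠ 0) (hxirl : ξ ^ 2 * (r u * l u) = 1) :
    ∀ (m : G) (j : ℕ),
      ∑ k ∈ Finset.range (2 * j + 1), ξ ^ (2 * j - k) * h (m - k • u)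
        = ((r u)⁻¹) ^ j * h (m - j • u) * ∑ k ∈ Finset.range (2 * j + 1), (ξ * r u) ^ k := by
  have hrnsmul : ∀ k : ℕ, r (k • u) = r u ^ k := by
    intro k; induction k with
    | zero => simpa using hr1
    | succ n ih => rw [succ_nsmul, hradd, ih, pow_succ]
  have hlnsmul : ∀ k : ℕ, l (k • u) = l u ^ k := by
    intro k; induction k with
    | zero => simpa using hl1
    | succ n ih => rw [succ_nsmul, hladd, ih, pow_succ]
  have hrneg : ∀ g, r g * r (-g) = 1 := by
    intro g; rw [← hradd, add_neg_cancel, hr1]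
  have hlhneg : ∀ g, l g * h (-g) = - (h g * r (-g)) := by
    intro g
    have h2 := hcoc g (-g)
    rw [add_neg_cancel, h0] at h2
    linear_combination -h2
  have msub : ∀ (x g : G), r g * l g * h (x - g) = h x * l g - l x * h g := by
    intro x g
    rw [sub_eq_add_neg, hcoc]
    have h4 := hlhneg g
    have h3 := hrneg g
    linear_combination (l g * h x - l x * h g) * h3 + (r g * l x) * h4
  -- two forms of the recursion for h (k • u)
  have hsucc : ∀ k : ℕ, h ((k+1) • u) = h (k • u) * r u + l u ^ k * h u := by
    intro k; rw [succ_nsmul, hcoc, hlnsmul]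
  have hsucc' : ∀ k : ℕ, h ((k+1) • u) = h u * r u ^ k + l u * h (k • u) := by
    intro k; rw [succ_nsmul', hcoc, hrnsmul]
  -- geometric sum splitting
  have sumsplit : ∀ (x : K) (n : ℕ), ∑ k ∈ Finset.range (n+2), x ^ k
      = 1 + x + x ^ 2 * ∑ k ∈ Finset.range n, x ^ k := by
    intro x n
    rw [Finset.sum_range_succ', Finset.sum_range_succ']
    rw [Finset.sum_congr rfl (fun k _ => by ring : ∀ k ∈ Finset.range n, x ^ (k+1+1) = x^2 * x^k),
      ← Finset.mul_sum]
    ring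
  -- the key scalar identity
  have star : ∀ j : ℕ, ξ ^ 2 * h u * r u * l u ^ (j+1) *
      (∑ k ∈ Finset.range (2*j+1), (ξ * r u) ^ k)
      = ξ * r u * l u * h (j • u) + h u * r u ^ j + l u * h (j • u) := by
    intro j; induction j with
    | zero =>
      simp only [Nat.mul_zero, Nat.zero_add, Finset.range_one, Finset.sum_singleton, pow_zero,
        zero_smul, h0, mul_zero, mul_one, add_zero, zero_add, pow_one]
      linear_combination (h u) * hxirl
    | succ j ih =>
      have hd : h (j • u) * r u + l u ^ j * h u = h u * r u ^ j + l u * h (j • u) := by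
        rw [← hsucc, hsucc']
      rw [show 2*(j+1)+1 = (2*j+1)+2 by ring, sumsplit, hsucc' j]
      linear_combination (l u * (ξ * r u + 1)) * hd + (ξ^2*(r u)^2*(l u)) * ih +
        (h u * (l u)^(j+1) + ξ*(r u)*(h u)*(l u)^(j+1) + ξ*(r u)^2*(l u)*(h (j • u))
          + (h u)*(r u)^(j+1) + (r u)*(l u)*(h (j • u))) * hxirl
  intro m j
  induction j with
  | zero =>
    simp [hr1]
  | succ j ih =>
    have e1 : h (m - j • u) = h (m - (j+1) • u) * r u + l (m - (j+1) • u) * h u := by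
      have e : m - j • u = (m - (j+1) • u) + u := by
        rw [succ_nsmul', sub_add_eq_sub_sub_swap, sub_add_cancel]
      rw [e, hcoc]
    have e2 : r u ^ j * l u ^ j * h (m - (2*j+1) • u)
        = h (m - (j+1) • u) * l u ^ j - l (m - (j+1) • u) * h (j • u) := by
      have e : m - (2*j+1) • u = (m - (j+1) • u) - j • u := by
        rw [show 2*j+1 = j+(j+1) by omega, add_nsmul, sub_add_eq_sub_sub_swap]
      rw [e, ← hrnsmul, ← hlnsmul, msub]
    have e3 : r u ^ (j+1) * l u ^ (j+1) * h (m - (2*j+1+1) • u)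
        = h (m - (j+1) • u) * l u ^ (j+1) - l (m - (j+1) • u) * h ((j+1) • u) := by
      have e : m - (2*j+1+1) • u = (m - (j+1) • u) - (j+1) • u := by
        rw [show 2*j+1+1 = (j+1)+(j+1) by omega, add_nsmul, sub_add_eq_sub_sub_swap]
      rw [e, ← hrnsmul, ← hlnsmul, msub]
    have pR : r u ^ (j+1) * ((r u)⁻¹) ^ j = r u := by
      rw [inv_pow, pow_succ, mul_comm (r u ^ j) (r u), mul_assoc,
        mul_inv_cancel₀ (pow_ne_zero _ (hrne u)), mul_one]
    have pR1 : r u ^ (j+1) * ((r u)⁻¹) ^ (j+1) = 1 := by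
      rw [inv_pow, mul_inv_cancel₀ (pow_ne_zero _ (hrne u))]
    rw [show 2*(j+1)+1 = (2*j+1)+2 by ring, sumsplit (ξ * r u) (2*j+1),
      show (2*j+1)+2 = (2*j+1)+1+1 by rfl, Finset.sum_range_succ, Finset.sum_range_succ,
      show 2*(j+1) - (2*j+1) = 1 by omega, show 2*(j+1) - (2*j+1+1) = 0 by omega]
    have hsum : ∑ k ∈ Finset.range (2*j+1), ξ^(2*(j+1)-k) * h (m - k • u)
        = ξ^2 * ∑ k ∈ Finset.range (2*j+1), ξ^(2*j-k) * h (m - k • u) := by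
      rw [Finset.mul_sum]
      refine Finset.sum_congr rfl fun k hk => ?_
      rw [Finset.mem_range] at hk
      rw [show 2*(j+1) - k = 2 + (2*j - k) by omega, pow_add]
      ring
    rw [hsum, ih]
    refine mul_left_cancel₀
      (mul_ne_zero (pow_ne_zero (j+1) (hrne u)) (pow_ne_zero (j+1) (hlne u))) ?_
    linear_combination
      (ξ^2 * (l u)^(j+1) * (∑ k ∈ Finset.range (2*j+1), (ξ * r u)^k) * h (m - j • u)) * pR
      + (ξ^2 * (r u) * (l u)^(j+1) * (∑ k ∈ Finset.range (2*j+1), (ξ * r u)^k)) * e1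
      + (ξ * r u * l u) * e2
      + e3
      - ((l u)^(j+1) * h (m - (j+1) • u)
          * (1 + ξ * r u + (ξ * r u)^2 * (∑ k ∈ Finset.range (2*j+1), (ξ * r u)^k))) * pR1
      + (l (m - (j+1) • u)) * star j
      - (l (m - (j+1) • u)) * hsucc' j
end

section
/- For any m ∈ G and any non-negative integer j, setting n = 2j+2, one has ∑_{k=0}^{n-1} ξ^{n-1-k} h(m - k·ū) = r₁^{-j} ( h(m - (j+1)·ū) + ξ h(m - j·ū) ) · ∑_{k=0}^{j} (ξ r₁)^{2k}. -/
theorem stmt10 {K : Type*} [Field K] {G : Type*} [AddGroup G]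
    (r l h : G → K)
    (hr1 : r 0 = 1) (hradd : ∀ m n, r (m + n) = r m * r n) (hrne : ∀ m, r m ≠ 0)
    (hl1 : l 0 = 1) (hladd : ∀ m n, l (m + n) = l m * l n) (hlne : ∀ m, l m ≠ 0)
    (hcoc : ∀ m n, h (m + n) = h m * r n + l m * h n)
    (h0 : h 0 = 0)
    (u : G) (hu : ∀ g : G, u + g = g + u)
    (ξ : K) (hξ : ξ ≠ 0) (hxirl : ξ ^ 2 * (r u * l u) = 1) :
    ∀ (m : G) (j : ℕ),
      ∑ k ∈ Finset.range (2 * j + 2), ξ ^ (2 * j + 1 - k) * h (m - k • u)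
        = ((r u)⁻¹) ^ j * (h (m - (j + 1) • u) + ξ * h (m - j • u))
            * ∑ k ∈ Finset.range (j + 1), (ξ * r u) ^ (2 * k) := by
  intro m j
  set f : ℕ → K := fun k => h (m - k • u) with hfdef
  set A : ℕ → K := fun t => ∑ i ∈ Finset.range (2 * t + 1), (-(ξ * r u)) ^ i with hAdef
  have hstep : ∀ k : ℕ, m - (k + 1) • u + u = m - k • u := by
    intro k
    rw [succ_nsmul']
    simp [sub_eq_add_neg, neg_add_rev, add_assoc]
  -- three-term recurrence for f
  have hfrec : ∀ k : ℕ,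
      f (k + 2) = ξ ^ 2 * (r u + l u) * f (k + 1) - ξ ^ 2 * f k := by
    intro k
    have e1 : f k = f (k + 1) * r u + l (m - (k + 2) • u) * l u * h u := by
      have := hcoc (m - (k + 1) • u) u
      rw [hstep k] at this
      rw [hfdef]
      simp only
      rw [this]
      have e3 : l (m - (k + 1) • u) = l (m - (k + 2) • u) * l u := by
        have := hladd (m - (k + 2) • u) u
        rw [hstep (k + 1)] at this
        exact this
      rw [e3]
    have e2 : f (k + 1) = f (k + 2) * r u + l (m - (k + 2) • u) * h u := by
      have := hcoc (m - (k + 2) • u) u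
      rw [hstep (k + 1)] at this
      rw [hfdef]
      simp only
      rw [this]
    linear_combination ξ ^ 2 * e1 - ξ ^ 2 * l u * e2 - f (k + 2) * hxirl
  -- recurrence for A
  have hArec : ∀ t : ℕ,
      A (t + 2) = ((ξ * r u) ^ 2 + 1) * A (t + 1) - (ξ * r u) ^ 2 * A t := by
    intro t
    rw [hAdef]
    simp only [show 2 * (t + 2) + 1 = (2 * t + 1) + 1 + 1 + 1 + 1 from by ring,
      show 2 * (t + 1) + 1 = (2 * t + 1) + 1 + 1 from by ring,
      Finset.sum_range_succ]
    ring
  -- pairing lemma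
  have hpair : ∀ t jj : ℕ,
      (r u) ^ t * (f (jj + 2 * t + 1) + ξ ^ (2 * t + 1) * f jj)
        = A t * (ξ * f (jj + t) + f (jj + t + 1)) := by
    intro t
    induction t using Nat.twoStepInduction with
    | zero =>
      intro jj
      simp [hAdef]
      ring
    | one =>
      intro jj
      have hA1v : A 1 = 1 - ξ * r u + (ξ * r u) ^ 2 := by
        rw [hAdef]
        simp [Finset.sum_range_succ]
        ring
      have e5 := hfrec (jj + 1)
      rw [show jj + 1 + 2 = jj + 3 from by omega, show jj + 1 + 1 = jj + 2 from by omega] at e5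
      have e0 := hfrec jj
      rw [show jj + 2 * 1 + 1 = jj + 3 from by omega, show jj + 1 + 1 = jj + 2 from by omega,
        hA1v]
      linear_combination (r u) * e5 + ξ * (r u) * e0 + (f (jj + 2) + ξ * f (jj + 1)) * hxirl
    | more t IH0 IH1 =>
      intro jj
      have ih1 := IH1 (jj + 1)
      rw [show jj + 1 + 2 * (t + 1) + 1 = jj + 2 * t + 4 from by omega,
        show jj + 1 + (t + 1) = jj + t + 2 from by omega,
        show jj + t + 2 + 1 = jj + t + 3 from by omega] at ih1
      have ih0 := IH0 (jj + 2)
      rw [show jj + 2 + 2 * t + 1 = jj + 2 * t + 3 from by omega,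
        show jj + 2 + t = jj + t + 2 from by omega,
        show jj + t + 2 + 1 = jj + t + 3 from by omega] at ih0
      have e5 := hfrec (jj + 2 * t + 3)
      rw [show jj + 2 * t + 3 + 2 = jj + 2 * t + 5 from by omega,
        show jj + 2 * t + 3 + 1 = jj + 2 * t + 4 from by omega] at e5
      have e0 := hfrec jj
      rw [show jj + 2 * (t + 2) + 1 = jj + 2 * t + 5 from by omega,
        show jj + (t + 2) = jj + t + 2 from by omega,
        show jj + t + 2 + 1 = jj + t + 3 from by omega]
      linear_combination (ξ ^ 2 * (r u + l u)) * (r u) * ih1 - ξ ^ 2 * (r u) ^ 2 * ih0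
        + (r u) ^ 2 * (r u) ^ t * e5
        + (r u) ^ 2 * (r u) ^ t * ξ ^ 2 * ξ ^ (2 * t + 1) * e0
        - (ξ * f (jj + t + 2) + f (jj + t + 3)) * (hArec t)
        + (ξ * f (jj + t + 2) + f (jj + t + 3)) * A (t + 1) * hxirl
  -- identity for the A-sums
  have hA1 : ∀ jj : ℕ, A jj
      = (∑ k ∈ Finset.range (jj + 1), (ξ * r u) ^ (2 * k))
        - (ξ * r u) * ∑ k ∈ Finset.range jj, (ξ * r u) ^ (2 * k) := by
    intro jj
    induction jj with
    | zero => simp [hAdef]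
    | succ n ih =>
      have hexp : A (n + 1) = A n + (-(ξ * r u)) ^ (2 * n + 1) + (-(ξ * r u)) ^ (2 * n + 2) := by
        rw [hAdef]
        simp only [show 2 * (n + 1) + 1 = (2 * n + 1) + 1 + 1 from by ring,
          Finset.sum_range_succ]
      rw [hexp, ih,
        show ((-(ξ * r u)) ^ (2 * n + 1)) = -((ξ * r u) ^ (2 * n + 1)) from
          Odd.neg_pow ⟨n, by ring⟩ _,
        show ((-(ξ * r u)) ^ (2 * n + 2)) = (ξ * r u) ^ (2 * n + 2) from
          Even.neg_pow ⟨n + 1, by ring⟩ _]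
      simp only [Finset.sum_range_succ]
      ring
  have hidA : ∀ jj : ℕ,
      (∑ t ∈ Finset.range (jj + 1), (ξ * r u) ^ (jj - t) * A t)
        = ∑ k ∈ Finset.range (jj + 1), (ξ * r u) ^ (2 * k) := by
    intro jj
    induction jj with
    | zero => simp [hAdef]
    | succ n ih =>
      rw [Finset.sum_range_succ, show n + 1 - (n + 1) = 0 from by omega]
      have hc : ∀ t ∈ Finset.range (n + 1),
          (ξ * r u) ^ (n + 1 - t) * A t = (ξ * r u) * ((ξ * r u) ^ (n - t) * A t) := by
        intro t ht
        rw [Finset.mem_range] at ht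
        rw [show n + 1 - t = (n - t) + 1 from by omega, pow_succ]
        ring
      rw [Finset.sum_congr rfl hc, ← Finset.mul_sum, ih, hA1 (n + 1),
        Finset.sum_range_succ (fun k => (ξ * r u) ^ (2 * k)) (n + 1)]
      ring
  -- split the main sum
  have hsplit : (∑ k ∈ Finset.range (2 * j + 2), ξ ^ (2 * j + 1 - k) * f k)
      = ∑ t ∈ Finset.range (j + 1),
          (ξ ^ (j - t) * f (j + 1 + t) + ξ ^ (j - t) * ξ ^ (2 * t + 1) * f (j - t)) := by
    rw [Finset.range_eq_Ico,
      ← Finset.sum_Ico_consecutive _ (by omega : 0 ≤ j + 1) (by omega : j + 1 ≤ 2 * j + 2),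
      ← Finset.range_eq_Ico, Finset.sum_Ico_eq_sum_range,
      ← Finset.sum_range_reflect (fun k => ξ ^ (2 * j + 1 - k) * f k) (j + 1),
      show 2 * j + 2 - (j + 1) = j + 1 from by omega, add_comm, ← Finset.sum_add_distrib]
    apply Finset.sum_congr rfl
    intro t ht
    rw [Finset.mem_range] at ht
    rw [show j + 1 - 1 - t = j - t from by omega,
      show 2 * j + 1 - (j - t) = (j - t) + (2 * t + 1) from by omega,
      show 2 * j + 1 - (j + 1 + t) = j - t from by omega, pow_add]
  -- put everything together
  have hfg : ∀ k : ℕ, h (m - k • u) = f k := fun _ => rfl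
  simp only [hfg]
  have hrj : (r u) ^ j ≠ 0 := pow_ne_zero _ (hrne u)
  apply mul_left_cancel₀ hrj
  rw [hsplit, Finset.mul_sum]
  have hterm : ∀ t ∈ Finset.range (j + 1),
      (r u) ^ j * (ξ ^ (j - t) * f (j + 1 + t) + ξ ^ (j - t) * ξ ^ (2 * t + 1) * f (j - t))
        = ((ξ * r u) ^ (j - t) * A t) * (ξ * f j + f (j + 1)) := by
    intro t ht
    rw [Finset.mem_range] at ht
    have hp := hpair t (j - t)
    rw [show j - t + 2 * t + 1 = j + 1 + t from by omega,
      show j - t + t = j from by omega] at hp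
    calc (r u) ^ j * (ξ ^ (j - t) * f (j + 1 + t) + ξ ^ (j - t) * ξ ^ (2 * t + 1) * f (j - t))
        = (ξ ^ (j - t) * (r u) ^ (j - t)) *
            ((r u) ^ t * (f (j + 1 + t) + ξ ^ (2 * t + 1) * f (j - t))) := by
          rw [show j = (j - t) + t from by omega]
          ring_nf
          rw [show j - t + t - t = j - t from by omega]
          ring
      _ = (ξ ^ (j - t) * (r u) ^ (j - t)) * (A t * (ξ * f j + f (j + 1))) := by rw [hp]
      _ = ((ξ * r u) ^ (j - t) * A t) * (ξ * f j + f (j + 1)) := by rw [mul_pow]; ring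
  rw [Finset.sum_congr rfl hterm, ← Finset.sum_mul, hidA]
  have hcancel : (r u) ^ j * (((r u)⁻¹) ^ j * (f (j + 1) + ξ * f j) *
      ∑ k ∈ Finset.range (j + 1), (ξ * r u) ^ (2 * k))
      = ((r u) ^ j * ((r u)⁻¹) ^ j) * ((f (j + 1) + ξ * f j) *
      ∑ k ∈ Finset.range (j + 1), (ξ * r u) ^ (2 * k)) := by ring
  rw [hcancel, ← mul_pow, mul_inv_cancel₀ (hrne u), one_pow, one_mul]
  ring
end

section
/- Assume h(ū) ≠ 0 and that ξ r₁ is not a root of unity. Then for a positive integer n, h(n·ū) = 0 never holds; in fact h(j·ū) = 0 for j ∈ ℤ if and only if j = 0. -/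
theorem stmt11 {K : Type*} [Field K] {G : Type*} [AddGroup G]
    (r l h : G → K)
    (hr1 : r 0 = 1) (hradd : ∀ m n, r (m + n) = r m * r n) (hrne : ∀ m, r m ≠ 0)
    (hl1 : l 0 = 1) (hladd : ∀ m n, l (m + n) = l m * l n) (hlne : ∀ m, l m ≠ 0)
    (hcoc : ∀ m n, h (m + n) = h m * r n + l m * h n)
    (h0 : h 0 = 0)
    (u : G) (hu : ∀ g : G, u + g = g + u)
    (ξ : K) (hξ : ξ ≠ 0) (hxirl : ξ ^ 2 * (r u * l u) = 1)
    (hhu : h u ≠ 0)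
    (hroot : ∀ k : ℤ, k ≠ 0 → (ξ * r u) ^ k ≠ 1) :
    ∀ j : ℤ, h (j • u) = 0 ↔ j = 0 := by
  set a := r u with ha
  set b := l u with hb
  -- l on natural multiples
  have hlpow : ∀ n : ℕ, l (n • u) = b ^ n := by
    intro n
    induction n with
    | zero => simpa using hl1
    | succ n ih => rw [succ_nsmul, hladd, ih, pow_succ]
  -- key identity
  have key : ∀ n : ℕ, h (n • u) * (b - a) = h u * (b ^ n - a ^ n) := by
    intro n
    induction n with
    | zero => simp [h0]
    | succ n ih =>
      rw [succ_nsmul, hcoc, hlpow]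
      have : (h (n • u) * a + b ^ n * h u) * (b - a)
          = (h (n • u) * (b - a)) * a + b ^ n * h u * (b - a) := by ring
      rw [this, ih]
      ring
  -- b ≠ a
  have hba : b ≠ a := by
    intro hba
    apply hroot 2 (by norm_num)
    have : (ξ * a) ^ (2 : ℕ) = 1 := by
      have h2 := hxirl; rw [hba] at h2
      linear_combination h2
    rw [show ((2:ℤ) = ((2:ℕ):ℤ)) by norm_num, zpow_natCast]
    exact this
  -- b ^ n ≠ a ^ n for n ≠ 0
  have hpow : ∀ n : ℕ, n ≠ 0 → b ^ n ≠ a ^ n := by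
    intro n hn hban
    apply hroot (2 * n) (by exact_mod_cast mul_ne_zero two_ne_zero (by exact_mod_cast hn))
    have h1 : (ξ ^ 2 * (a * b)) ^ n = 1 := by rw [hxirl, one_pow]
    have hbase : (ξ * a) ^ 2 = ξ ^ 2 * (a * a) := by ring
    have : (ξ * a) ^ (2 * n : ℕ) = 1 := by
      calc (ξ * a) ^ (2 * n) = (ξ ^ 2 * (a * a)) ^ n := by rw [pow_mul, hbase]
        _ = (ξ ^ 2) ^ n * (a ^ n * a ^ n) := by rw [mul_pow, mul_pow]
        _ = (ξ ^ 2) ^ n * (a ^ n * b ^ n) := by rw [hban]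
        _ = (ξ ^ 2 * (a * b)) ^ n := by rw [mul_pow, mul_pow]
        _ = 1 := h1
    rw [show ((2 * n : ℤ) = ((2 * n : ℕ) : ℤ)) by push_cast; ring, zpow_natCast]
    exact this
  -- natural case
  have hnat : ∀ n : ℕ, n ≠ 0 → h (n • u) ≠ 0 := by
    intro n hn hz
    have := key n
    rw [hz, zero_mul] at this
    have h2 : b ^ n - a ^ n ≠ 0 := sub_ne_zero.mpr (hpow n hn)
    exact h2 (by
      rcases mul_eq_zero.mp this.symm with h | h
      · exact absurd h hhu
      · exact h)
  -- pairing j and -j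
  have hpair : ∀ j : ℤ, h (j • u) = 0 ↔ h ((-j) • u) = 0 := by
    have main : ∀ j : ℤ, h (j • u) = 0 → h ((-j) • u) = 0 := by
      intro j hz
      have hsum : (j • u) + ((-j) • u) = 0 := by
        rw [← add_zsmul]; simp
      have := hcoc (j • u) ((-j) • u)
      rw [hsum, h0, hz, zero_mul, zero_add] at this
      exact (mul_eq_zero.mp this.symm).resolve_left (hlne _)
    intro j
    constructor
    · exact main j
    · intro hz
      have := main (-j) hz
      rwa [neg_neg] at this
  intro j
  constructor
  · intro hz
    by_contra hj
    obtain ⟨n, rfl | rfl⟩ := j.eq_nat_or_neg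
    · have hn : n ≠ 0 := by exact_mod_cast hj
      rw [natCast_zsmul] at hz
      exact hnat n hn hz
    · have hn : n ≠ 0 := by intro h'; apply hj; rw [h']; simp
      have hz' : h (((n : ℤ)) • u) = 0 := by
        have := (hpair (-(n:ℤ))).mp hz
        rwa [neg_neg] at this
      rw [natCast_zsmul] at hz'
      exact hnat n hn hz'
  · rintro rfl
    simpa using h0
end

section
/- Assume h(ū) ≠ 0, (ξ r₁)² ≠ 1, and ξ r₁ has finite multiplicative order N. Let N' = N if N is odd and N' = N/2 if N is even. Then for a positive integer n, h(n·ū) = 0 if and only if N' divides n. -/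
theorem stmt12 {K : Type*} [Field K] {G : Type*} [AddGroup G]
    (r l h : G → K)
    (hr1 : r 0 = 1) (hradd : ∀ m n, r (m + n) = r m * r n) (hrne : ∀ m, r m ≠ 0)
    (hl1 : l 0 = 1) (hladd : ∀ m n, l (m + n) = l m * l n) (hlne : ∀ m, l m ≠ 0)
    (hcoc : ∀ m n, h (m + n) = h m * r n + l m * h n)
    (h0 : h 0 = 0)
    (u : G) (hu : ∀ g : G, u + g = g + u)
    (ξ : K) (hξ : ξ ≠ 0) (hxirl : ξ ^ 2 * (r u * l u) = 1)
    (hhu : h u ≠ 0)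
    (hsq : (ξ * r u) ^ 2 ≠ 1)
    (N : ℕ) (hN : 0 < N) (hord : orderOf (ξ * r u) = N) :
    ∀ n : ℕ, 0 < n →
      (h (n • u) = 0 ↔ (if N % 2 = 0 then N / 2 else N) ∣ n) := by
  have hlpow : ∀ n : ℕ, l (n • u) = l u ^ n := by
    intro n
    induction n with
    | zero => simpa using hl1
    | succ n ih => rw [succ_nsmul, hladd, ih, pow_succ]
  have key : ∀ n : ℕ, h (n • u) * (r u - l u) = h u * (r u ^ n - l u ^ n) := by
    intro n
    induction n with
    | zero => simp [h0]
    | succ n ih =>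
      rw [succ_nsmul, hcoc, hlpow]
      have : (h (n • u) * (r u - l u)) * r u + l u ^ n * h u * (r u - l u)
          = (h (n • u) * r u + l u ^ n * h u) * (r u - l u) := by ring
      calc (h (n • u) * r u + l u ^ n * h u) * (r u - l u)
          = (h (n • u) * (r u - l u)) * r u + l u ^ n * h u * (r u - l u) := by ring
        _ = (h u * (r u ^ n - l u ^ n)) * r u + l u ^ n * h u * (r u - l u) := by rw [ih]
        _ = h u * (r u ^ (n + 1) - l u ^ (n + 1)) := by ring
  have hrl : r u - l u ≠ 0 := by
    intro hEq
    apply hsq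
    have : r u = l u := sub_eq_zero.mp hEq
    rw [mul_pow, ← hxirl, this]
    ring
  -- h (n•u) = 0 ↔ r u ^ n = l u ^ n
  have step1 : ∀ n : ℕ, h (n • u) = 0 ↔ r u ^ n = l u ^ n := by
    intro n
    constructor
    · intro hz
      have := key n
      rw [hz, zero_mul] at this
      have := (mul_eq_zero.mp this.symm).resolve_left hhu
      exact sub_eq_zero.mp this
    · intro he
      have := key n
      rw [he, sub_self, mul_zero] at this
      exact (mul_eq_zero.mp this).resolve_right hrl
  -- r u ^ n = l u ^ n ↔ (ξ * r u) ^ (2*n) = 1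
  have step2 : ∀ n : ℕ, r u ^ n = l u ^ n ↔ (ξ * r u) ^ (2 * n) = 1 := by
    intro n
    have hx2 : (ξ * r u) ^ (2 * n) = (ξ ^ 2 * r u ^ 2) ^ n := by
      rw [pow_mul]; ring_nf
    constructor
    · intro he
      rw [hx2]
      have : ξ ^ 2 * r u ^ 2 = ξ ^ 2 * (r u * l u) * (r u ^ 1 / l u ^ 1) := by
        field_simp [hlne u]
      calc (ξ ^ 2 * r u ^ 2) ^ n = (ξ ^ 2 * (r u * l u)) ^ n * (r u ^ n / l u ^ n) := by
            rw [this]; rw [mul_pow, div_pow, ← pow_mul, ← pow_mul]; ring_nf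
        _ = 1 := by rw [hxirl, he, one_pow, one_mul, div_self (pow_ne_zero n (hlne u))]
    · intro he
      rw [hx2] at he
      have h1 : (ξ ^ 2) ^ n * (r u ^ n * r u ^ n) = 1 := by
        rw [← he, mul_pow, ← pow_mul, ← pow_mul, Nat.mul_comm 2 n, pow_mul, pow_mul]; ring
      have h2 : (ξ ^ 2) ^ n * (r u ^ n * l u ^ n) = 1 := by
        rw [← mul_pow, ← mul_pow, hxirl, one_pow]
      have hxne : (ξ ^ 2) ^ n * r u ^ n ≠ 0 :=
        mul_ne_zero (pow_ne_zero n (pow_ne_zero 2 hξ)) (pow_ne_zero n (hrne u))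
      have : (ξ ^ 2) ^ n * r u ^ n * r u ^ n = (ξ ^ 2) ^ n * r u ^ n * l u ^ n := by
        rw [mul_assoc, mul_assoc, h1, h2]
      exact mul_left_cancel₀ hxne this
  intro n hn
  rw [step1, step2, ← hord, orderOf_dvd_iff_pow_eq_one.symm, hord]
  -- now: N ∣ 2 * n ↔ (if ...) ∣ n
  by_cases hpar : N % 2 = 0
  · simp only [hpar, if_pos]
    obtain ⟨k, hk⟩ := Nat.dvd_of_mod_eq_zero hpar
    subst hk
    rw [Nat.mul_div_cancel_left k (by norm_num),
      Nat.mul_dvd_mul_iff_left (by norm_num : 0 < 2)]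
  · simp only [hpar, if_neg]
    have hcop : Nat.Coprime N 2 := by
      exact Nat.coprime_two_right.mpr (Nat.odd_iff.mpr (by omega))
    constructor
    · intro hd
      exact (Nat.Coprime.dvd_of_dvd_mul_left hcop hd)
    · intro hd
      exact hd.mul_left 2
end

section
/- Assume h(ū) ≠ 0, (ξ r₁)² ≠ 1, and ξ r₁ has finite multiplicative order N. Then for a positive integer n, one has h((n-1)·ū) + ξ h(n·ū) = 0 if and only if N divides 2n - 1. -/
theorem stmt13 {K : Type*} [Field K] {G : Type*} [AddGroup G]
    (r l h : G → K)
    (hr1 : r 0 = 1) (hradd : ∀ m n, r (m + n) = r m * r n) (hrne : ∀ m, r m ≠ 0)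
    (hl1 : l 0 = 1) (hladd : ∀ m n, l (m + n) = l m * l n) (hlne : ∀ m, l m ≠ 0)
    (hcoc : ∀ m n, h (m + n) = h m * r n + l m * h n)
    (h0 : h 0 = 0)
    (u : G) (hu : ∀ g : G, u + g = g + u)
    (ξ : K) (hξ : ξ ≠ 0) (hxirl : ξ ^ 2 * (r u * l u) = 1)
    (hhu : h u ≠ 0)
    (hsq : (ξ * r u) ^ 2 ≠ 1)
    (N : ℕ) (hN : 0 < N) (hord : orderOf (ξ * r u) = N) :
    ∀ n : ℕ, 0 < n →
      (h ((n - 1) • u) + ξ * h (n • u) = 0 ↔ N ∣ 2 * n - 1) := by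
  have hq0 : ξ * r u ≠ 0 := mul_ne_zero hξ (hrne u)
  have hq1 : ξ * r u ≠ 1 := by
    intro h'; apply hsq; rw [h', one_pow]
  have hlu : l u ≠ 0 := hlne u
  have lpow : ∀ m : ℕ, l (m • u) = l u ^ m := by
    intro m
    induction m with
    | zero => simpa using hl1
    | succ k ih => rw [succ_nsmul, hladd, ih, pow_succ]
  have key : ∀ m : ℕ, 1 ≤ m →
      h ((m - 1) • u) + ξ * h (m • u)
        = h u * ξ * (l u) ^ (m - 1) *
            ∑ j ∈ Finset.range (2 * m - 1), (ξ * r u) ^ j := by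
    intro m hm
    induction m, hm using Nat.le_induction with
    | base => simp [h0]; ring
    | succ k hk ih =>
      have A : h ((k + 1) • u) = h (k • u) * r u + l u ^ k * h u := by
        rw [succ_nsmul, hcoc, lpow]
      have hk' : (k - 1) + 1 = k := Nat.succ_pred_eq_of_pos hk
      have B : h (k • u) = h ((k - 1) • u) * r u + l u ^ (k - 1) * h u := by
        conv_lhs => rw [← hk']
        rw [succ_nsmul, hcoc, lpow]
      have hx : h (k • u) * (1 + ξ * r u)
          = h u * ξ * l u ^ (k - 1) * (∑ j ∈ Finset.range (2 * k - 1), (ξ * r u) ^ j) * r u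
            + l u ^ (k - 1) * h u := by
        linear_combination B + r u * ih
      have hC : ∑ j ∈ Finset.range (2 * (k + 1) - 1), (ξ * r u) ^ j
          = (ξ * r u) ^ 2 * (∑ j ∈ Finset.range (2 * k - 1), (ξ * r u) ^ j)
            + (ξ * r u) + 1 := by
        have e1 : 2 * (k + 1) - 1 = (2 * k - 1) + 1 + 1 := by omega
        rw [e1, geom_sum_succ, geom_sum_succ]
        ring
      have hk1 : (k + 1) - 1 = k := rfl
      rw [hk1, A, hC]
      have hLk : l u ^ k = l u ^ (k - 1) * l u := by rw [← pow_succ, hk']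
      rw [hLk]
      linear_combination hx
        - (h u * ξ * l u ^ (k - 1) * (∑ j ∈ Finset.range (2 * k - 1), (ξ * r u) ^ j) * r u
            + h u * l u ^ (k - 1)) * hxirl
  intro n hn
  rw [key n hn]
  have hne : h u * ξ * l u ^ (n - 1) ≠ 0 :=
    mul_ne_zero (mul_ne_zero hhu hξ) (pow_ne_zero _ hlu)
  rw [mul_eq_zero, or_iff_right hne, ← hord, orderOf_dvd_iff_pow_eq_one]
  constructor
  · intro hS
    have hgm := geom_sum_mul (ξ * r u) (2 * n - 1)
    rw [hS, zero_mul] at hgm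
    linear_combination -hgm
  · intro hp
    have hgm := geom_sum_mul (ξ * r u) (2 * n - 1)
    rw [hp, sub_self] at hgm
    rcases mul_eq_zero.mp hgm with h' | h'
    · exact h'
    · exact absurd (sub_eq_zero.mp h') hq1
end

section
/- Define for m ∈ G and positive integer n the quantity P(m,n) = ∑_{k=0}^{n-1} ξ^{n-1-k} h(m - k·ū), and define d(m) as the least positive integer n with P(m,n) = 0 (when it exists). Assume h(ū) ≠ 0 and ξ r₁ is not a root of unity. Then for m₀ ∈ G with h(m₀) = 0 and any j ≥ 0, d(m₀ + j·ū) = 2j + 1. -/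
theorem stmt14 {K : Type*} [Field K] {G : Type*} [AddGroup G]
    (r l h : G → K)
    (hr1 : r 0 = 1) (hradd : ∀ m n, r (m + n) = r m * r n) (hrne : ∀ m, r m ≠ 0)
    (hl1 : l 0 = 1) (hladd : ∀ m n, l (m + n) = l m * l n) (hlne : ∀ m, l m ≠ 0)
    (hcoc : ∀ m n, h (m + n) = h m * r n + l m * h n)
    (h0 : h 0 = 0)
    (u : G) (hu : ∀ g : G, u + g = g + u)
    (ξ : K) (hξ : ξ ≠ 0) (hxirl : ξ ^ 2 * (r u * l u) = 1)
    (hhu : h u ≠ 0)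
    (hroot : ∀ k : ℤ, k ≠ 0 → (ξ * r u) ^ k ≠ 1)
    (m0 : G) (hm0 : h m0 = 0) :
    ∀ j : ℕ,
      IsLeast {n : ℕ | 0 < n ∧
        ∑ k ∈ Finset.range n, ξ ^ (n - 1 - k) * h (m0 + j • u - k • u) = 0} (2 * j + 1) := by
  obtain ⟨q, hqdef⟩ : ∃ x : K, ξ * r u = x := ⟨_, rfl⟩
  simp only [hqdef] at hroot
  have hq0 : q ≠ 0 := hqdef ▸ mul_ne_zero hξ (hrne u)
  have hq1 : q ≠ 1 := fun hc => hroot 1 one_ne_zero (by rwa [zpow_one])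
  have hq21 : q ^ 2 - 1 ≠ 0 := by
    intro hc
    exact hroot 2 two_ne_zero (by norm_cast; exact sub_eq_zero.mp hc)
  have hru : r u = ξ⁻¹ * q := by field_simp [← hqdef]; linear_combination hqdef
  have hlu : l u = (ξ * q)⁻¹ := by
    have h1 := hxirl
    rw [hru] at h1
    field_simp at h1
    have h2 : (ξ * q) * l u = 1 := mul_left_cancel₀ hξ (by rw [mul_one]; linear_combination ξ * h1)
    exact eq_inv_of_mul_eq_one_left (by linear_combination h2)
  -- the multiplicative map l on the line m0 + ℤ•u
  have hlz : ∀ t : ℤ, l (m0 + t • u) = l m0 * (l u) ^ t := by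
    intro t
    induction t using Int.induction_on with
    | zero => simp
    | succ i ih =>
      have e : m0 + ((i:ℤ)+1) • u = m0 + (i:ℤ) • u + u := by
        rw [add_zsmul, one_zsmul, add_assoc]
      rw [e, hladd, ih, zpow_add_one₀ (hlne u), mul_assoc]
    | pred i ih =>
      have e : m0 + (-(i:ℤ)-1) • u + u = m0 + (-(i:ℤ)) • u := by
        rw [sub_zsmul, one_zsmul, add_assoc, add_assoc, neg_add_cancel, add_zero]
      have h3 : l (m0 + (-(i:ℤ)-1) • u) * l u = l m0 * l u ^ (-(i:ℤ)) := by
        rw [← hladd, e, ih]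
      rw [eq_div_of_mul_eq (hlne u) h3, zpow_sub_one₀ (hlne u), div_eq_mul_inv, mul_assoc]
  -- closed formula for h on the line
  have hF : ∀ t : ℤ, h (m0 + t • u) * (q^2 - 1)
      = l m0 * h u * ξ * q * ξ ^ (-t) * (q ^ t - q ^ (-t)) := by
    intro t
    induction t using Int.induction_on with
    | zero => simp [hm0]
    | succ i ih =>
      have e : m0 + ((i:ℤ)+1) • u = m0 + (i:ℤ) • u + u := by
        rw [add_zsmul, one_zsmul, add_assoc]
      rw [e, hcoc, hlz, hru, hlu]
      have z1 : ξ ^ (-((i:ℤ)+1)) = ξ ^ (-(i:ℤ)) * ξ⁻¹ := by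
        rw [show -((i:ℤ)+1) = -(i:ℤ) + (-1) by ring, zpow_add₀ hξ, zpow_neg_one]
      have z2 : q ^ ((i:ℤ)+1) = q ^ ((i:ℤ)) * q := zpow_add_one₀ hq0 _
      have z3 : q ^ (-((i:ℤ)+1)) = q ^ (-(i:ℤ)) * q⁻¹ := by
        rw [show -((i:ℤ)+1) = -(i:ℤ) + (-1) by ring, zpow_add₀ hq0, zpow_neg_one]
      have z4 : ((ξ*q)⁻¹) ^ ((i:ℤ)) = ξ ^ (-(i:ℤ)) * q ^ (-(i:ℤ)) := by
        rw [inv_zpow, ← zpow_neg, mul_zpow]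
      rw [z1, z2, z3, z4]
      generalize hgZ : ξ ^ (-(i:ℤ)) = Z at ih ⊢
      generalize hgX : q ^ ((i:ℤ)) = X at ih ⊢
      generalize hgY : q ^ (-(i:ℤ)) = Y at ih ⊢
      generalize hgH : h (m0 + (i:ℤ) • u) = H at ih ⊢
      field_simp
      linear_combination q * ih
    | pred i ih =>
      have e : m0 + (-(i:ℤ)-1) • u + u = m0 + (-(i:ℤ)) • u := by
        rw [sub_zsmul, one_zsmul, add_assoc, add_assoc, neg_add_cancel, add_zero]
      have hc := hcoc (m0 + (-(i:ℤ)-1) • u) u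
      rw [e, hlz, hru, hlu] at hc
      rw [hc] at ih
      simp only [neg_neg] at ih
      have z1 : ξ ^ (-(-(i:ℤ)-1)) = ξ ^ ((i:ℤ)) * ξ := by
        rw [show -(-(i:ℤ)-1) = (i:ℤ)+1 by ring, zpow_add_one₀ hξ]
      have z2 : q ^ (-(i:ℤ)-1) = q ^ (-(i:ℤ)) * q⁻¹ := by
        rw [show -(i:ℤ)-1 = -(i:ℤ) + (-1) by ring, zpow_add₀ hq0, zpow_neg_one]
      have z3 : q ^ (-(-(i:ℤ)-1)) = q ^ ((i:ℤ)) * q := by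
        rw [show -(-(i:ℤ)-1) = (i:ℤ)+1 by ring, zpow_add_one₀ hq0]
      have z4 : ((ξ*q)⁻¹) ^ (-(i:ℤ)-1) = (ξ ^ ((i:ℤ)) * ξ) * (q ^ ((i:ℤ)) * q) := by
        rw [inv_zpow, ← zpow_neg, mul_zpow, show -(-(i:ℤ)-1) = (i:ℤ)+1 by ring,
          zpow_add_one₀ hξ, zpow_add_one₀ hq0]
      rw [z4] at ih
      rw [z1, z2, z3]
      generalize hgZ : ξ ^ ((i:ℤ)) = Z at ih ⊢
      generalize hgX : q ^ (-(i:ℤ)) = X at ih ⊢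
      generalize hgY : q ^ ((i:ℤ)) = Y at ih ⊢
      generalize hgH : h (m0 + (-(i:ℤ)-1) • u) = H at ih ⊢
      field_simp at ih ⊢
      linear_combination ih
  have hF' : ∀ t : ℤ, h (m0 + t • u)
      = l m0 * h u * ξ * q * ξ ^ (-t) * (q ^ t - q ^ (-t)) / (q^2 - 1) := by
    intro t
    rw [eq_div_iff hq21]
    exact hF t
  have hq1' : q⁻¹ ≠ 1 := fun hc => hq1 (inv_eq_one.mp hc)
  have hqm1 : q - 1 ≠ 0 := sub_ne_zero.mpr hq1
  have hqm1' : q⁻¹ - 1 ≠ 0 := sub_ne_zero.mpr hq1'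
  intro j
  -- termwise rewriting of the sum
  have hterm : ∀ n : ℕ, ∀ k ∈ Finset.range n,
      ξ ^ (n - 1 - k) * h (m0 + j • u - k • u)
        = (l m0 * h u * ξ * q / (q^2-1)) * ξ ^ ((n:ℤ) - 1 - j) *
            (q ^ ((j:ℤ) - k) - q ^ (-((j:ℤ) - k))) := by
    intro n k hk
    have hkn : k < n := Finset.mem_range.mp hk
    have e1 : m0 + j • u - k • u = m0 + ((j:ℤ) - (k:ℤ)) • u := by
      rw [sub_zsmul, natCast_zsmul, natCast_zsmul, sub_eq_add_neg, add_assoc]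
    have e2 : ξ ^ (n - 1 - k) = ξ ^ ((n:ℤ) - 1 - k) := by
      rw [← zpow_natCast]; congr 1; omega
    rw [e1, e2, hF']
    have e3 : ξ ^ ((n:ℤ)-1-(k:ℤ)) * ξ ^ ((k:ℤ)-(j:ℤ)) = ξ ^ ((n:ℤ)-1-(j:ℤ)) := by
      rw [← zpow_add₀ hξ]; congr 1; ring
    simp only [show -((j:ℤ)-(k:ℤ)) = (k:ℤ)-(j:ℤ) by ring]
    generalize hP : ξ ^ ((n:ℤ)-1-(k:ℤ)) = P at e3 ⊢
    generalize hQ : ξ ^ ((k:ℤ)-(j:ℤ)) = Q2 at e3 ⊢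
    generalize hR : ξ ^ ((n:ℤ)-1-(j:ℤ)) = R2 at e3 ⊢
    generalize hS : q ^ ((j:ℤ)-(k:ℤ)) = S
    generalize hT2 : q ^ ((k:ℤ)-(j:ℤ)) = T
    field_simp
    rw [← e3]; ring
  -- the key equivalence
  have key : ∀ n : ℕ, 0 < n →
      ((∑ k ∈ Finset.range n, ξ ^ (n - 1 - k) * h (m0 + j • u - k • u) = 0) ↔
        (n : ℤ) = 2 * j + 1) := by
    intro n hn
    rw [Finset.sum_congr rfl (hterm n), ← Finset.mul_sum]
    have hT : ∑ k ∈ Finset.range n, (q ^ ((j:ℤ) - (k:ℤ)) - q ^ (-((j:ℤ) - (k:ℤ))))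
        = q ^ ((j:ℤ)) * (((q⁻¹)^n - 1)/(q⁻¹-1)) - q ^ (-(j:ℤ)) * ((q^n - 1)/(q-1)) := by
      rw [Finset.sum_sub_distrib]
      have h1 : ∀ k ∈ Finset.range n, q ^ ((j:ℤ)-(k:ℤ)) = q ^ ((j:ℤ)) * (q⁻¹)^k := by
        intro k _
        rw [zpow_sub₀ hq0, div_eq_mul_inv, zpow_natCast, zpow_natCast, ← inv_pow]
      have h2 : ∀ k ∈ Finset.range n, q ^ (-((j:ℤ)-(k:ℤ))) = q ^ (-(j:ℤ)) * q^k := by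
        intro k _
        rw [show -((j:ℤ)-(k:ℤ)) = -(j:ℤ) + (k:ℤ) by ring, zpow_add₀ hq0, zpow_natCast]
      rw [Finset.sum_congr rfl h1, Finset.sum_congr rfl h2, ← Finset.mul_sum, ← Finset.mul_sum,
        geom_sum_eq hq1' n, geom_sum_eq hq1 n]
    rw [hT]
    -- closed form of the bracket
    have hW0 : q ^ n - 1 ≠ 0 := by
      intro hc
      exact hroot (n:ℤ) (by omega) (by rw [zpow_natCast]; exact sub_eq_zero.mp hc)
    have hA0 : q ^ ((j:ℤ)) ≠ 0 := zpow_ne_zero _ hq0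
    have z5 : q ^ ((2*(j:ℤ)+1)-(n:ℤ)) = q ^ ((j:ℤ)) * q ^ ((j:ℤ)) * q * (q^n)⁻¹ := by
      rw [show (2*(j:ℤ)+1)-(n:ℤ) = (j:ℤ) + (j:ℤ) + 1 + (-(n:ℤ)) by ring,
        zpow_add₀ hq0, zpow_add₀ hq0, zpow_add₀ hq0, zpow_one, zpow_neg, zpow_natCast, zpow_natCast]
    have z6 : q ^ (-(j:ℤ)) = (q ^ ((j:ℤ)))⁻¹ := by rw [zpow_neg]
    have hbr : q ^ ((j:ℤ)) * (((q⁻¹)^n - 1)/(q⁻¹-1)) - q ^ (-(j:ℤ)) * ((q^n - 1)/(q-1))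
        = (q ^ (-(j:ℤ)) * (q^n - 1) / (q-1)) * (q ^ ((2*(j:ℤ)+1)-(n:ℤ)) - 1) := by
      rw [z5, z6, inv_pow]
      have hWne : q ^ n ≠ 0 := pow_ne_zero _ hq0
      generalize hgA : q ^ ((j:ℤ)) = A at hA0 ⊢
      generalize hgW : q ^ n = W at hW0 hWne ⊢
      have hq1'' : 1 - q ≠ 0 := fun hc => hq1 (by linear_combination -hc)
      have hWq : W - W * q ≠ 0 := by
        rw [show W - W * q = W * (1 - q) by ring]
        exact mul_ne_zero hWne hq1''
      field_simp [hWq, hq1'']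
      ring
    rw [hbr]
    have hD0 : (l m0 * h u * ξ * q / (q^2-1)) * ξ ^ ((n:ℤ) - 1 - j) *
        (q ^ (-(j:ℤ)) * (q^n - 1) / (q-1)) ≠ 0 := by
      apply mul_ne_zero
      apply mul_ne_zero
      · exact div_ne_zero (by exact mul_ne_zero (mul_ne_zero (mul_ne_zero (hlne m0) hhu) hξ) hq0) hq21
      · exact zpow_ne_zero _ hξ
      · exact div_ne_zero (mul_ne_zero (zpow_ne_zero _ hq0) hW0) hqm1
    rw [show (l m0 * h u * ξ * q / (q^2-1)) * ξ ^ ((n:ℤ) - 1 - j) *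
        ((q ^ (-(j:ℤ)) * (q^n - 1) / (q-1)) * (q ^ ((2*(j:ℤ)+1)-(n:ℤ)) - 1))
      = ((l m0 * h u * ξ * q / (q^2-1)) * ξ ^ ((n:ℤ) - 1 - j) *
        (q ^ (-(j:ℤ)) * (q^n - 1) / (q-1))) * (q ^ ((2*(j:ℤ)+1)-(n:ℤ)) - 1) by ring]
    constructor
    · intro hs
      rcases mul_eq_zero.mp hs with hc | hc
      · exact absurd hc hD0
      · have : q ^ ((2*(j:ℤ)+1)-(n:ℤ)) = 1 := sub_eq_zero.mp hc
        by_contra hne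
        exact hroot ((2*(j:ℤ)+1)-(n:ℤ)) (by omega) this
    · intro he
      have : (2*(j:ℤ)+1)-(n:ℤ) = 0 := by omega
      rw [this, zpow_zero, sub_self, mul_zero]
  constructor
  · refine ⟨by omega, (key (2*j+1) (by omega)).mpr ?_⟩
    push_cast; ring
  · rintro n ⟨hn, hs⟩
    have := (key n hn).mp hs
    omega
end

section
/- With the same setup and assumptions (h(ū) ≠ 0, ξ r₁ not a root of unity), for m₁ ∈ G with h(m₁ - ū) + ξ h(m₁) = 0 and any integer j ≥ 0, d(m₁ + j·ū) = 2j + 2, where d(m) is the least positive integer n with ∑_{k=0}^{n-1} ξ^{n-1-k} h(m - k·ū) = 0. -/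
lemma aux_hom_zsmul {K : Type*} [Field K] {G : Type*} [AddGroup G] (f : G → K)
    (hf1 : f 0 = 1) (hfadd : ∀ m n, f (m + n) = f m * f n) (u : G) (hfu : f u ≠ 0) :
    ∀ t : ℤ, f (t • u) = f u ^ t := by
  have hinv : f (-u) = (f u)⁻¹ := by
    have h1 : f u * f (-u) = 1 := by rw [← hfadd]; simpa using hf1
    exact eq_inv_of_mul_eq_one_left (mul_comm (f u) (f (-u)) ▸ h1)
  intro t
  induction t using Int.induction_on with
  | zero => simpa using hf1
  | succ n ih => rw [add_zsmul, one_zsmul, hfadd, ih, zpow_add_one₀ hfu]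
  | pred n ih =>
    rw [sub_zsmul, one_zsmul, sub_eq_add_neg, hfadd, ih, hinv,
      show (-(n:ℤ) + -1) = -(n:ℤ) - 1 by ring, zpow_sub_one₀ hfu]

theorem stmt15 {K : Type*} [Field K] {G : Type*} [AddGroup G]
    (r l h : G → K)
    (hr1 : r 0 = 1) (hradd : ∀ m n, r (m + n) = r m * r n) (hrne : ∀ m, r m ≠ 0)
    (hl1 : l 0 = 1) (hladd : ∀ m n, l (m + n) = l m * l n) (hlne : ∀ m, l m ≠ 0)
    (hcoc : ∀ m n, h (m + n) = h m * r n + l m * h n)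
    (h0 : h 0 = 0)
    (u : G) (hu : ∀ g : G, u + g = g + u)
    (ξ : K) (hξ : ξ ≠ 0) (hxirl : ξ ^ 2 * (r u * l u) = 1)
    (hhu : h u ≠ 0)
    (hroot : ∀ k : ℤ, k ≠ 0 → (ξ * r u) ^ k ≠ 1)
    (m1 : G) (hm1 : h (m1 - u) + ξ * h m1 = 0) :
    ∀ j : ℕ,
      IsLeast {n : ℕ | 0 < n ∧
        ∑ k ∈ Finset.range n, ξ ^ (n - 1 - k) * h (m1 + j • u - k • u) = 0} (2 * j + 2) := by
  intro j
  have hr0 := hrne u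
  have hl0 := hlne u
  obtain ⟨q, hqdef⟩ : ∃ x : K, x = ξ * r u := ⟨_, rfl⟩
  have hroot' : ∀ k : ℤ, k ≠ 0 → q ^ k ≠ 1 := by rw [hqdef]; exact hroot
  have hq0 : q ≠ 0 := by rw [hqdef]; exact mul_ne_zero hξ hr0
  have hqz : ∀ t : ℤ, q ^ t = 1 → t = 0 := by
    intro t ht; by_contra hc; exact hroot' t hc ht
  have hq1ne : q ≠ 1 := by
    intro hc
    have := hqz 1 (by rw [zpow_one]; exact hc); norm_num at this
  have hlq : l u = (ξ * q)⁻¹ :=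
    eq_inv_of_mul_eq_one_left (by rw [hqdef]; linear_combination hxirl)
  have hrq : r u = ξ⁻¹ * q := by rw [hqdef]; field_simp
  have hlr : l u - r u ≠ 0 := by
    intro hc
    have hlr' : l u = r u := by linear_combination hc
    have h2 : q ^ (2:ℤ) = 1 := by
      rw [show (2:ℤ) = ((2:ℕ):ℤ) by norm_num, zpow_natCast, hqdef]
      linear_combination hxirl - ξ ^ 2 * r u * hlr'
    have := hqz 2 h2; norm_num at this
  -- the sequence t ↦ h (m1 + t • u)
  set a : ℤ → K := fun t => h (m1 + t • u) with hadef
  obtain ⟨B, hBdef⟩ : ∃ x : K, x = l m1 * h u / (l u - r u) := ⟨_, rfl⟩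
  obtain ⟨A, hAdef⟩ : ∃ x : K, x = h m1 - B := ⟨_, rfl⟩
  have hBne : B ≠ 0 := by
    rw [hBdef]; exact div_ne_zero (mul_ne_zero (hlne m1) hhu) hlr
  have hBk : B * (l u - r u) = l m1 * h u := by
    rw [hBdef]; exact div_mul_cancel₀ _ hlr
  have hrec : ∀ t : ℤ, a (t + 1) = a t * r u + l m1 * (l u) ^ t * h u := by
    intro t
    show h (m1 + (t + 1) • u) = _
    rw [add_zsmul, one_zsmul, ← add_assoc, hcoc (m1 + t • u) u, hladd,
      aux_hom_zsmul l hl1 hladd u hl0]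
  have hclosed : ∀ t : ℤ, a t = A * (r u) ^ t + B * (l u) ^ t := by
    intro t
    induction t using Int.induction_on with
    | zero =>
      have e : a 0 = h m1 := by simp [hadef]
      rw [e, zpow_zero, zpow_zero, hAdef]; ring
    | succ n ih =>
      rw [hrec, ih, zpow_add_one₀ hr0, zpow_add_one₀ hl0]
      linear_combination (-(l u) ^ (n:ℤ)) * hBk
    | pred n ih =>
      have step := hrec (-(n:ℤ) - 1)
      rw [show (-(n:ℤ) - 1) + 1 = -(n:ℤ) by ring, ih,
        zpow_sub_one₀ hl0] at step
      apply mul_right_cancel₀ hr0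
      rw [zpow_sub_one₀ hr0, zpow_sub_one₀ hl0]
      have hrr : r u * (r u)⁻¹ = 1 := mul_inv_cancel₀ hr0
      have hll : l u * (l u)⁻¹ = 1 := mul_inv_cancel₀ hl0
      linear_combination (-1 : K) * step - A * (r u) ^ (-(n:ℤ)) * hrr -
        B * (l u) ^ (-(n:ℤ)) * hll + (l u) ^ (-(n:ℤ)) * (l u)⁻¹ * hBk
  have hm1' : a (-1) + ξ * a 0 = 0 := by
    have e : m1 + (-1 : ℤ) • u = m1 - u := by
      simp [sub_eq_add_neg]
    show h (m1 + (-1:ℤ) • u) + ξ * h (m1 + (0:ℤ) • u) = 0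
    rw [e]; simpa using hm1
  have h1q : (1 : K) + q ≠ 0 := by
    intro hc
    have hq' : q = -1 := by linear_combination hc
    have h2 : q ^ (2:ℤ) = 1 := by
      rw [show (2:ℤ) = ((2:ℕ):ℤ) by norm_num, zpow_natCast, hq']; norm_num
    have := hqz 2 h2; norm_num at this
  have hA : A = -(q * B) := by
    have hl1inv : (l u)⁻¹ = ξ ^ 2 * r u :=
      inv_eq_of_mul_eq_one_left (by linear_combination hxirl)
    rw [hclosed, hclosed] at hm1'
    simp only [zpow_zero, mul_one, zpow_neg, zpow_one] at hm1'
    rw [hl1inv] at hm1'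
    have hrr : r u * (r u)⁻¹ = 1 := mul_inv_cancel₀ hr0
    have key : (A + q * B) * ((1 + q) * (r u)⁻¹) = 0 := by
      rw [hqdef]
      linear_combination hm1' + (ξ * A + ξ * B + ξ ^ 2 * r u * B) * hrr
    rcases mul_eq_zero.mp key with hk | hk
    · linear_combination hk
    · rcases mul_eq_zero.mp hk with hk' | hk'
      · exact absurd hk' h1q
      · exact absurd (inv_eq_zero.mp hk') hr0
  have key2 : ∀ e1 e2 : ℤ, ξ ^ e1 * (A * (r u) ^ e2 + B * (l u) ^ e2)
      = B * ξ ^ (e1 - e2) * (q ^ (-e2) - q ^ (e2 + 1)) := by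
    intro e1 e2
    rw [hA, hrq, hlq, mul_zpow, inv_zpow, inv_zpow, mul_zpow,
      zpow_sub₀ hξ, zpow_neg, zpow_add_one₀ hq0]
    ring
  have hsmul2 : ∀ k : ℕ, m1 + j • u - k • u = m1 + ((j:ℤ) - k) • u := by
    intro k
    rw [sub_zsmul, natCast_zsmul, natCast_zsmul, add_sub_assoc, sub_eq_add_neg]
  have hsum : ∀ n : ℕ, ∑ k ∈ Finset.range n, ξ ^ (n - 1 - k) * h (m1 + j • u - k • u)
      = B * ξ ^ ((n:ℤ) - 1 - j) * q ^ (-(j:ℤ)) *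
        ((1 - q ^ (2*(j:ℤ) + 2 - n)) * ∑ k ∈ Finset.range n, q ^ (k:ℤ)) := by
    intro n
    have step1 : ∀ k ∈ Finset.range n,
        ξ ^ (n - 1 - k) * h (m1 + j • u - k • u)
        = B * ξ ^ ((n:ℤ) - 1 - j) * q ^ (-(j:ℤ)) *
          (q ^ (k:ℤ) - q ^ (2*(j:ℤ) + 2 - n) * q ^ ((n:ℤ) - 1 - k)) := by
      intro k hk
      have hkn := Finset.mem_range.mp hk
      have hx : ξ ^ (n - 1 - k) = ξ ^ ((n:ℤ) - 1 - k) := by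
        rw [← zpow_natCast]; congr 1; omega
      rw [hx, hsmul2 k,
        show h (m1 + ((j:ℤ) - k) • u)
          = A * (r u) ^ ((j:ℤ) - k) + B * (l u) ^ ((j:ℤ) - k) from hclosed ((j:ℤ) - k),
        key2 ((n:ℤ) - 1 - k) ((j:ℤ) - k),
        show ((n:ℤ) - 1 - k) - ((j:ℤ) - k) = (n:ℤ) - 1 - j by ring,
        show -((j:ℤ) - k) = -(j:ℤ) + k by ring,
        show ((j:ℤ) - k) + 1 = -(j:ℤ) + (2*(j:ℤ) + 2 - n + ((n:ℤ) - 1 - k)) by ring,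
        zpow_add₀ hq0, zpow_add₀ hq0, zpow_add₀ hq0]
      ring
    rw [Finset.sum_congr rfl step1]
    have refl0 := Finset.sum_range_reflect (fun i : ℕ => q ^ (i:ℤ)) n
    have refl' : ∑ k ∈ Finset.range n, q ^ ((n:ℤ) - 1 - k)
        = ∑ k ∈ Finset.range n, q ^ (k:ℤ) := by
      rw [← refl0]
      exact Finset.sum_congr rfl fun k hk => by
        have hkn := Finset.mem_range.mp hk
        congr 1
        omega
    rw [← Finset.mul_sum, Finset.sum_sub_distrib, ← Finset.mul_sum, refl']
    ring
  constructor
  · refine ⟨by omega, ?_⟩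
    rw [hsum (2*j+2),
      show 2*(j:ℤ) + 2 - ((2*j+2 : ℕ):ℤ) = 0 by push_cast; ring, zpow_zero]
    simp
  · rintro n ⟨hn0, hS⟩
    rw [hsum n] at hS
    have hT : ∑ k ∈ Finset.range n, q ^ (k:ℤ) ≠ 0 := by
      have e : ∑ k ∈ Finset.range n, q ^ (k:ℤ) = ∑ k ∈ Finset.range n, q ^ k :=
        Finset.sum_congr rfl fun k _ => zpow_natCast q k
      rw [e, geom_sum_eq hq1ne n]
      apply div_ne_zero
      · intro hc
        have hqn : q ^ n = 1 := by linear_combination hc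
        have := hqz n (by rw [zpow_natCast]; exact hqn)
        omega
      · exact sub_ne_zero.mpr hq1ne
    have hD : 1 - q ^ (2*(j:ℤ) + 2 - n) = 0 := by
      by_contra hD
      exact (mul_ne_zero (mul_ne_zero (mul_ne_zero hBne (zpow_ne_zero _ hξ))
        (zpow_ne_zero _ hq0)) (mul_ne_zero hD hT)) hS
    have hone : q ^ (2*(j:ℤ) + 2 - n) = 1 := by linear_combination -hD
    have hz := hqz _ hone
    omega
end

section
/- With the same setup, suppose h(ū) ≠ 0 and ξ r₁ is not a root of unity. If m ∈ G satisfies h(m) = 0 or h(m - ū) + ξ h(m) = 0, then for every integer j < 0 there is no positive integer n with ∑_{k=0}^{n-1} ξ^{n-1-k} h(m + j·ū - k·ū) = 0; i.e. d(m + j·ū) does not exist (the module L(m + j·ū) is infinite-dimensional). -/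
theorem stmt16 {K : Type*} [Field K] {G : Type*} [AddGroup G]
    (r l h : G → K)
    (hr1 : r 0 = 1) (hradd : ∀ m n, r (m + n) = r m * r n) (hrne : ∀ m, r m ≠ 0)
    (hl1 : l 0 = 1) (hladd : ∀ m n, l (m + n) = l m * l n) (hlne : ∀ m, l m ≠ 0)
    (hcoc : ∀ m n, h (m + n) = h m * r n + l m * h n)
    (h0 : h 0 = 0)
    (u : G) (hu : ∀ g : G, u + g = g + u)
    (ξ : K) (hξ : ξ ≠ 0) (hxirl : ξ ^ 2 * (r u * l u) = 1)
    (hhu : h u ≠ 0)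
    (hroot : ∀ k : ℤ, k ≠ 0 → (ξ * r u) ^ k ≠ 1)
    (m : G) (hm : h m = 0 ∨ h (m - u) + ξ * h m = 0) :
    ∀ j : ℤ, j < 0 → ∀ n : ℕ, 0 < n →
      ∑ k ∈ Finset.range n, ξ ^ (n - 1 - k) * h (m + j • u - k • u) ≠ 0 := by
  obtain ⟨q, hqdef⟩ : ∃ x : K, x = ξ * r u := ⟨_, rfl⟩
  have hq0 : q ≠ 0 := by rw [hqdef]; exact mul_ne_zero hξ (hrne u)
  have hqn : ∀ T : ℕ, T ≠ 0 → q ^ T ≠ 1 := by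
    intro T hT
    have := hroot (T : ℤ) (by exact_mod_cast hT)
    rw [zpow_natCast] at this
    rwa [hqdef]
  have hq1 : q ≠ 1 := by have := hqn 1 one_ne_zero; simpa using this
  have hq1' : q⁻¹ ≠ 1 := by rwa [ne_eq, inv_eq_one]
  have hqm1 : 1 + q ≠ 0 := by
    intro hc
    have hq' : q = -1 := by linear_combination hc
    have : q ^ 2 = 1 := by rw [hq']; norm_num
    exact hqn 2 (by norm_num) this
  have hxl : ξ * l u = q⁻¹ :=
    eq_inv_of_mul_eq_one_right (by rw [hqdef]; linear_combination hxirl)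
  have hru : r u = ξ⁻¹ * q := by rw [hqdef]; field_simp
  have hlu : l u = ξ⁻¹ * q⁻¹ := by rw [← hxl]; field_simp
  have hlr : l u - r u ≠ 0 := by
    intro hc
    have : q * q = 1 := by
      rw [hqdef]; linear_combination hxirl - ξ ^ 2 * r u * hc
    exact hqn 2 (by norm_num) (by rw [pow_two]; exact this)
  obtain ⟨B, hBdef⟩ : ∃ x : K, x = l m * h u / (l u - r u) := ⟨_, rfl⟩
  obtain ⟨A, hAdef⟩ : ∃ x : K, x = h m - B := ⟨_, rfl⟩
  have hB0 : B ≠ 0 := by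
    rw [hBdef]; exact div_ne_zero (mul_ne_zero (hlne m) hhu) hlr
  have hBkey : B * (l u - r u) = l m * h u := by
    rw [hBdef]; exact div_mul_cancel₀ _ hlr
  -- l on multiples of u
  have hlinv : ∀ g : G, l (-g) = (l g)⁻¹ := by
    intro g
    refine eq_inv_of_mul_eq_one_right ?_
    rw [← hladd, add_neg_cancel, hl1]
  have hlz : ∀ t : ℤ, l (t • u) = l u ^ t := by
    intro t
    induction t using Int.induction_on with
    | zero => simp [hl1]
    | succ k ih =>
      rw [add_zsmul, one_zsmul, hladd, ih, zpow_add_one₀ (hlne u)]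
    | pred k ih =>
      have e : (-(k : ℤ) - 1) • u = (-(k : ℤ)) • u + -u := by
        rw [sub_zsmul, one_zsmul]
      rw [e, hladd, ih, hlinv, zpow_sub_one₀ (hlne u)]
  -- recurrence
  have hrecur : ∀ t : ℤ, h (m + (t + 1) • u)
      = h (m + t • u) * r u + l m * l u ^ t * h u := by
    intro t
    rw [show m + (t + 1) • u = (m + t • u) + u by rw [add_zsmul, one_zsmul, add_assoc],
      hcoc, hladd, hlz]
  -- value formula
  have hval : ∀ t : ℤ, h (m + t • u) = A * r u ^ t + B * l u ^ t := by
    intro t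
    induction t using Int.induction_on with
    | zero => simp [hAdef]
    | succ k ih =>
      rw [hrecur, ih, zpow_add_one₀ (hrne u), zpow_add_one₀ (hlne u)]
      linear_combination (-(l u ^ (k : ℤ))) * hBkey
    | pred k ih =>
      have hstep := hrecur (-(k : ℤ) - 1)
      rw [sub_add_cancel, ih] at hstep
      have hr0 := hrne u
      rw [eq_comm, ← sub_eq_iff_eq_add'] at hstep
      have hX : h (m + (-(k:ℤ) - 1) • u)
          = (A * r u ^ (-(k:ℤ)) + B * l u ^ (-(k:ℤ))
              - l m * l u ^ (-(k:ℤ) - 1) * h u) / r u := by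
        rw [← hstep]; field_simp; ring
      rw [hX, div_eq_iff hr0, zpow_sub_one₀ (hrne u), zpow_sub_one₀ (hlne u)]
      have hriv : r u * (r u)⁻¹ = 1 := mul_inv_cancel₀ (hrne u)
      have hliv : l u * (l u)⁻¹ = 1 := mul_inv_cancel₀ (hlne u)
      linear_combination (-(A * r u ^ (-(k:ℤ)))) * hriv
        + (-(B * l u ^ (-(k:ℤ)))) * hliv
        + (l u ^ (-(k:ℤ)) * (l u)⁻¹) * hBkey
  intro j hj n hn
  obtain ⟨J, rfl⟩ : ∃ J : ℕ, j = -(J : ℤ) - 1 := ⟨(-j - 1).toNat, by omega⟩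
  obtain ⟨N, rfl⟩ : ∃ N : ℕ, n = N + 1 := ⟨n - 1, by omega⟩
  have hterm : ∀ k ∈ Finset.range (N + 1),
      ξ ^ (N + 1 - 1 - k) * h (m + (-(J : ℤ) - 1) • u - k • u)
        = ξ ^ (N + J + 1) * (A * (q ^ (J + 1))⁻¹ * (q⁻¹) ^ k
            + B * q ^ (J + 1) * q ^ k) := by
    intro k hk
    have hkN : k ≤ N := by simpa [Nat.lt_succ_iff] using hk
    have e1 : m + (-(J : ℤ) - 1) • u - k • u = m + (-((J : ℤ) + 1 + k)) • u := by
      have e2 : (-((J : ℤ) + 1 + k)) • u = (-(J : ℤ) - 1) • u - (k : ℕ) • u := by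
        rw [show -((J : ℤ) + 1 + (k : ℤ)) = (-(J : ℤ) - 1) - (k : ℤ) from by ring,
          sub_zsmul, natCast_zsmul]
        exact (sub_eq_add_neg _ _).symm
      rw [e2, add_sub_assoc]
    rw [e1, hval]
    have he : -((J : ℤ) + 1 + k) = -(((J + 1 + k : ℕ) : ℤ)) := by push_cast; ring
    have hre : r u ^ (-((J : ℤ) + 1 + k)) = ξ ^ (J + 1 + k) * (q ^ (J + 1 + k))⁻¹ := by
      rw [hru, he, zpow_neg, zpow_natCast, mul_pow, mul_inv, inv_pow, inv_inv]
    have hle : l u ^ (-((J : ℤ) + 1 + k)) = ξ ^ (J + 1 + k) * q ^ (J + 1 + k) := by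
      rw [hlu, he, zpow_neg, zpow_natCast, mul_pow, mul_inv, inv_pow, inv_pow,
        inv_inv, inv_inv]
    rw [hre, hle, show N + 1 - 1 - k = N - k from by omega, pow_sub₀ ξ hξ hkN]
    rw [inv_pow]
    field_simp
    ring
  rw [Finset.sum_congr rfl hterm, ← Finset.mul_sum, Finset.sum_add_distrib,
    ← Finset.mul_sum, ← Finset.mul_sum]
  have hqs : q - 1 ≠ 0 := sub_ne_zero.mpr hq1
  obtain ⟨S, hSdef⟩ : ∃ x : K, x = ∑ k ∈ Finset.range (N + 1), q ^ k := ⟨_, rfl⟩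
  have hS0 : S ≠ 0 := by
    rw [hSdef, geom_sum_eq hq1]
    exact div_ne_zero (sub_ne_zero.mpr (hqn (N + 1) (by omega))) hqs
  have hrev : ∑ k ∈ Finset.range (N + 1), (q⁻¹) ^ k = (q ^ N)⁻¹ * S := by
    rw [hSdef, ← Finset.sum_range_reflect, Finset.mul_sum]
    apply Finset.sum_congr rfl
    intro k hk
    have hk' : k ≤ N := by simpa [Nat.lt_succ_iff] using hk
    rw [show N + 1 - 1 - k = N - k from by omega, inv_pow, pow_sub₀ q hq0 hk']
    field_simp
  rw [hrev, ← hSdef]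
  have hbr : A * (q ^ (J + 1))⁻¹ * ((q ^ N)⁻¹ * S)
      + B * q ^ (J + 1) * S
      = S * q ^ (J + 1) * (q ^ (2 * J + N + 2))⁻¹
          * (A + B * q ^ (2 * J + N + 2)) := by
    field_simp
    ring
  rw [hbr]
  have hG2 : S ≠ 0 := hS0
  have hinner : A + B * q ^ (2 * J + N + 2) ≠ 0 := by
    rcases hm with hm1 | hm2
    · have hA : A = -B := by rw [hAdef, hm1]; ring
      rw [hA]
      intro hc
      have h3 : B * (q ^ (2 * J + N + 2) - 1) = 0 := by linear_combination hc
      rcases mul_eq_zero.mp h3 with h4 | h4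
      · exact hB0 h4
      · exact hqn (2 * J + N + 2) (by omega) (by linear_combination h4)
    · have hv1 : h (m - u) = A * (r u)⁻¹ + B * (l u)⁻¹ := by
        have := hval (-1)
        rw [show m + (-1 : ℤ) • u = m - u by simp [sub_eq_add_neg]] at this
        simpa [zpow_neg] using this
      have heq : A * (ξ * q⁻¹) + B * (ξ * q) + ξ * (A + B) = 0 := by
        have h1 : (r u)⁻¹ = ξ * q⁻¹ := by rw [hru, mul_inv, inv_inv]
        have h2 : (l u)⁻¹ = ξ * q := by rw [hlu, mul_inv, inv_inv, inv_inv]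
        have hAB : h m = A + B := by rw [hAdef]; ring
        rw [hv1, h1, h2, hAB] at hm2
        linear_combination hm2
      have hqq : q⁻¹ * q = 1 := inv_mul_cancel₀ hq0
      have hfacξ : ξ * ((1 + q) * (A + B * q)) = 0 := by
        linear_combination q * heq - A * ξ * hqq
      have hfac : (1 + q) * (A + B * q) = 0 := by
        rcases mul_eq_zero.mp hfacξ with hc | hc
        · exact absurd hc hξ
        · exact hc
      have hA : A = -B * q := by
        rcases mul_eq_zero.mp hfac with hc | hc
        · exact absurd hc hqm1
        · linear_combination hc
      rw [hA]
      intro hc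
      have hE1 : q ^ (2 * J + N + 2) = q * q ^ (2 * J + N + 1) := by
        rw [pow_succ]; ring
      have h3 : B * q * (q ^ (2 * J + N + 1) - 1) = 0 := by
        rw [hE1] at hc; linear_combination hc
      rcases mul_eq_zero.mp h3 with h4 | h4
      · exact mul_ne_zero hB0 hq0 h4
      · exact hqn (2 * J + N + 1) (by omega) (by linear_combination h4)
  exact mul_ne_zero (pow_ne_zero _ hξ)
    (mul_ne_zero (mul_ne_zero (mul_ne_zero hG2 (pow_ne_zero _ hq0))
      (inv_ne_zero (pow_ne_zero _ hq0))) hinner)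
end

section
/- Assume h(ū) ≠ 0 and ξ r₁ is not a root of unity. Let m ∈ G with h(m) = 0, and for j ≥ 0 define the Casimir eigenvalue c(j) = ∑_{k=0}^{j-1} ξ^k h(m + (k+1)·ū). If c(j₁) = c(j₂) for non-negative integers j₁, j₂, then j₁ = j₂. -/
theorem stmt19 {K : Type*} [Field K] {G : Type*} [AddGroup G]
    (r l h : G → K)
    (hr1 : r 0 = 1) (hradd : ∀ m n, r (m + n) = r m * r n) (hrne : ∀ m, r m ≠ 0)
    (hl1 : l 0 = 1) (hladd : ∀ m n, l (m + n) = l m * l n) (hlne : ∀ m, l m ≠ 0)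
    (hcoc : ∀ m n, h (m + n) = h m * r n + l m * h n)
    (h0 : h 0 = 0)
    (u : G) (hu : ∀ g : G, u + g = g + u)
    (ξ : K) (hξ : ξ ≠ 0) (hxirl : ξ ^ 2 * (r u * l u) = 1)
    (hhu : h u ≠ 0)
    (hroot : ∀ k : ℤ, k ≠ 0 → (ξ * r u) ^ k ≠ 1)
    (m : G) (hm : h m = 0) :
    ∀ j₁ j₂ : ℕ,
      (∑ k ∈ Finset.range j₁, ξ ^ k * h (m + (k + 1) • u))
        = (∑ k ∈ Finset.range j₂, ξ ^ k * h (m + (k + 1) • u)) → j₁ = j₂ := by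
  intro j₁ j₂ hEq
  set a : K := ξ * r u with ha_def
  have ha0 : a ≠ 0 := mul_ne_zero hξ (hrne u)
  set b : K := a⁻¹ with hb_def
  have hab : a * b = 1 := mul_inv_cancel₀ ha0
  have hab' : a * (ξ * l u) = 1 := by rw [ha_def]; linear_combination hxirl
  have hξlb : ξ * l u = b := eq_inv_of_mul_eq_one_right hab'
  have hlsmul : ∀ n : ℕ, l (n • u) = l u ^ n := by
    intro n
    induction n with
    | zero => simpa using hl1
    | succ n ih => rw [succ_nsmul, hladd, ih, pow_succ]
  -- closed form for ξ^n * h ((n+1) • u)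
  have hH : ∀ n : ℕ, (a ^ 2 - 1) * (ξ ^ n * h ((n + 1) • u)) =
      h u * (a ^ (n + 2) - b ^ n) := by
    intro n
    induction n with
    | zero => rw [zero_add, one_nsmul]; ring
    | succ n ih =>
      have hsucc : (n + 1 + 1) • u = (n + 1) • u + u := succ_nsmul u (n + 1)
      rw [hsucc, hcoc, hlsmul]
      have e1 : ξ ^ (n + 1) * l u ^ (n + 1) = b ^ (n + 1) := by
        rw [← mul_pow, hξlb]
      have e2 : ξ * r u = a := ha_def.symm
      linear_combination a * ih + (a ^ 2 - 1) * h u * e1 +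
        (a ^ 2 - 1) * ξ ^ n * h ((n + 1) • u) * e2 + h u * a * b ^ n * hab
  -- closed form for the partial sums
  have hS : ∀ j : ℕ, (a - 1) * (a ^ 2 - 1) *
      (∑ k ∈ Finset.range j, ξ ^ k * h (m + (k + 1) • u)) =
      l m * h u * (a ^ (j + 2) + a * b ^ j - a ^ 2 - a) := by
    intro j
    induction j with
    | zero => simp
    | succ j ih =>
      rw [Finset.sum_range_succ]
      have hterm : h (m + (j + 1) • u) = l m * h ((j + 1) • u) := by
        rw [hcoc, hm]; ring
      rw [hterm]
      linear_combination ih + (a - 1) * l m * hH j - l m * h u * b ^ j * hab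
  -- cancel to obtain the key equality
  have hlm : l m ≠ 0 := hlne m
  have hE : a ^ (j₁ + 2) + a * b ^ j₁ = a ^ (j₂ + 2) + a * b ^ j₂ := by
    have h1 := hS j₁
    rw [hEq, hS j₂] at h1
    have h2 := mul_left_cancel₀ (mul_ne_zero hlm hhu) h1.symm
    linear_combination h2
  have hbpow : ∀ j : ℕ, a ^ j * b ^ j = 1 := fun j => by
    rw [← mul_pow, hab, one_pow]
  have hE2 : a ^ (2 * j₁ + j₂ + 2) + a ^ (j₂ + 1) =
      a ^ (j₁ + 2 * j₂ + 2) + a ^ (j₁ + 1) := by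
    linear_combination a ^ (j₁ + j₂) * hE - a ^ (j₂ + 1) * hbpow j₁ +
      a ^ (j₁ + 1) * hbpow j₂
  have hfact : (a ^ j₁ - a ^ j₂) * (a ^ (j₁ + j₂ + 2) - a) = 0 := by
    linear_combination hE2
  have hnat_pow_ne : ∀ n : ℕ, n ≠ 0 → a ^ n ≠ 1 := by
    intro n hn hcontra
    refine hroot (n : ℤ) (by exact_mod_cast hn) ?_
    rw [zpow_natCast]
    exact hcontra
  have h2ne : a ^ (j₁ + j₂ + 2) - a ≠ 0 := by
    intro hc
    have hc' : a ^ (j₁ + j₂ + 1) * a = 1 * a := by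
      rw [one_mul, ← pow_succ]
      exact sub_eq_zero.mp hc
    exact hnat_pow_ne (j₁ + j₂ + 1) (by omega) (mul_right_cancel₀ ha0 hc')
  have hpow_eq : a ^ j₁ = a ^ j₂ := by
    have := (mul_eq_zero.mp hfact).resolve_right h2ne
    exact sub_eq_zero.mp this
  rcases lt_trichotomy j₁ j₂ with hlt | heq | hgt
  · exfalso
    apply hnat_pow_ne (j₂ - j₁) (by omega)
    have : a ^ (j₂ - j₁) * a ^ j₁ = 1 * a ^ j₁ := by
      rw [one_mul, ← pow_add]
      rw [Nat.sub_add_cancel hlt.le]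
      exact hpow_eq.symm
    exact mul_right_cancel₀ (pow_ne_zero _ ha0) this
  · exact heq
  · exfalso
    apply hnat_pow_ne (j₁ - j₂) (by omega)
    have : a ^ (j₁ - j₂) * a ^ j₂ = 1 * a ^ j₂ := by
      rw [one_mul, ← pow_add]
      rw [Nat.sub_add_cancel hgt.le]
      exact hpow_eq
    exact mul_right_cancel₀ (pow_ne_zero _ ha0) this
end
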